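/- arXiv:2203.09323 — 9 statements merged into one kernel-verified Lean document; each statement's English description precedes it below -/
import Mathlib

section
/- For all positive natural numbers m and n, the minimal number of monotonically increasing polyominoes needed to cover the lattice rectangle R_{m×n} equals min{m,n}. That is, R_{m×n} can be covered by min{m,n} increasing monotonous polyominoes, but not by fewer, since each increasing polyomino covers at most one of the antidiagonal cells (j, min{m,n}+1−j) for j = 1,…,min{m,n}. -/
/-- A monotonous polyomino in the lattice rectangle `R_{m×n}`, spanning columns
`r` to `s` (with `1 ≤ r ≤ s ≤ m`), encoded by a monotone function `P` taking
values in `{1,…,n}` on `{r-1,…,s}`. -/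
structure MonoPoly (m n : ℕ) where
  r : ℕ
  s : ℕ
  P : ℕ → ℕ
  one_le_r : 1 ≤ r
  r_le_s : r ≤ s
  s_le_m : s ≤ m
  val_mem : ∀ t, r - 1 ≤ t → t ≤ s → 1 ≤ P t ∧ P t ≤ n
  mono : (∀ t u, r - 1 ≤ t → t ≤ u → u ≤ s → P t ≤ P u) ∨
         (∀ t u, r - 1 ≤ t → t ≤ u → u ≤ s → P u ≤ P t)

/-- The cell set of a monotonous polyomino:
`{(t,j) : r ≤ t ≤ s, min(P(t-1),P(t)) ≤ j ≤ max(P(t-1),P(t))}`. -/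
def MonoPoly.cells {m n : ℕ} (Q : MonoPoly m n) : Set (ℕ × ℕ) :=
  {c | Q.r ≤ c.1 ∧ c.1 ≤ Q.s ∧
       min (Q.P (c.1 - 1)) (Q.P c.1) ≤ c.2 ∧
       c.2 ≤ max (Q.P (c.1 - 1)) (Q.P c.1)}

/-- A monotonous polyomino is increasing if its encoding function is
nondecreasing on `{r-1,…,s}`. -/
def MonoPoly.Increasing {m n : ℕ} (Q : MonoPoly m n) : Prop :=
  ∀ t u, Q.r - 1 ≤ t → t ≤ u → u ≤ Q.s → Q.P t ≤ Q.P u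

/-- A monotonous polyomino is decreasing if its encoding function is
nonincreasing on `{r-1,…,s}`. -/
def MonoPoly.Decreasing {m n : ℕ} (Q : MonoPoly m n) : Prop :=
  ∀ t u, Q.r - 1 ≤ t → t ≤ u → u ≤ Q.s → Q.P u ≤ Q.P t

/-- A monotonous polyomino is fully defined on `{0,…,m}` if `r = 1` and `s = m`. -/
def MonoPoly.Full {m n : ℕ} (Q : MonoPoly m n) : Prop :=
  Q.r = 1 ∧ Q.s = m

/-- `F` is a covering of `R_{m×n}` by `p` monotonous polyominoes: every cell
`(k,l)` with `1 ≤ k ≤ m`, `1 ≤ l ≤ n` belongs to some member of the family. -/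
def IsCovering (m n p : ℕ) (F : Fin p → MonoPoly m n) : Prop :=
  ∀ k l : ℕ, 1 ≤ k → k ≤ m → 1 ≤ l → l ≤ n → ∃ a, (k, l) ∈ (F a).cells

/-- An `(i,d)`-covering of `R_{m×n}`: `i` increasing and `d` decreasing
monotonous polyominoes whose cell sets together cover `{1,…,m}×{1,…,n}`. -/
def IsIDCovering (m n i d : ℕ) (F : Fin i → MonoPoly m n)
    (G : Fin d → MonoPoly m n) : Prop :=
  (∀ a, (F a).Increasing) ∧ (∀ b, (G b).Decreasing) ∧
  ∀ k l : ℕ, 1 ≤ k → k ≤ m → 1 ≤ l → l ≤ n →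
    (∃ a, (k, l) ∈ (F a).cells) ∨ (∃ b, (k, l) ∈ (G b).cells)

/-- The minimal number of monotonous polyominoes needed to cover `R_{m×n}`. -/
noncomputable def minCover (m n : ℕ) : ℕ :=
  sInf {p : ℕ | ∃ F : Fin p → MonoPoly m n, IsCovering m n p F}

/-- `m(n,i,d) ∈ ℕ∞`: the supremum of all `m` such that `R_{m×n}` admits an
`(i,d)`-covering. -/
noncomputable def mSup (n i d : ℕ) : ℕ∞ :=
  ⨆ m ∈ {m : ℕ | ∃ (F : Fin i → MonoPoly m n) (G : Fin d → MonoPoly m n),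
      IsIDCovering m n i d F G}, (m : ℕ∞)

/-- `f : ℕ → ℕ` encodes an increasing monotonous polyomino in `R_{m×n}` fully
defined on `{0,…,m}`: values in `{1,…,n}` and nondecreasing on `{0,…,m}`. -/
def IncFull (m n : ℕ) (f : ℕ → ℕ) : Prop :=
  (∀ t, t ≤ m → 1 ≤ f t ∧ f t ≤ n) ∧ (∀ t u, t ≤ u → u ≤ m → f t ≤ f u)

/-- The cell set of an increasing polyomino fully defined on `{0,…,m}`,
encoded by the nondecreasing function `f`. -/
def cellsFull (m : ℕ) (f : ℕ → ℕ) : Set (ℕ × ℕ) :=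
  {c | 1 ≤ c.1 ∧ c.1 ≤ m ∧ f (c.1 - 1) ≤ c.2 ∧ c.2 ≤ f c.1}


/-- An increasing polyomino cannot contain two cells going strictly
down-right: if it contains cells in columns `k < k'`, the row of the first
is at most the row of the second. -/
lemma inc_key {m n : ℕ} (Q : MonoPoly m n) (hQ : Q.Increasing)
    {k l k' l' : ℕ} (h1 : (k, l) ∈ Q.cells) (h2 : (k', l') ∈ Q.cells)
    (hkk' : k < k') : l ≤ l' := by
  simp only [MonoPoly.cells, Set.mem_setOf_eq] at h1 h2
  obtain ⟨hr1, hs1, hmin1, hmax1⟩ := h1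
  obtain ⟨hr2, hs2, hmin2, hmax2⟩ := h2
  have h0 := Q.one_le_r
  have e1 : Q.P (k - 1) ≤ Q.P k := hQ (k - 1) k (by omega) (by omega) hs1
  have e2 : Q.P k ≤ Q.P (k' - 1) := hQ k (k' - 1) (by omega) (by omega) (by omega)
  have e3 : Q.P (k' - 1) ≤ Q.P k' := hQ (k' - 1) k' (by omega) (by omega) hs2
  omega

/-- For positive `m, n`, the minimal number of increasing monotonous
polyominoes needed to cover `R_{m×n}` equals `min m n`. -/
theorem stmt5 (m n : ℕ) (hm : 1 ≤ m) (hn : 1 ≤ n) :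
    IsLeast {p : ℕ | ∃ F : Fin p → MonoPoly m n,
      (∀ a, (F a).Increasing) ∧ IsCovering m n p F} (min m n) := by
  constructor
  · simp only [Set.mem_setOf_eq]
    rcases le_or_gt m n with h | h
    · -- min m n = m : cover by columns
      refine ⟨fun a => ⟨a.val + 1, a.val + 1, fun t => if t ≤ a.val then 1 else n,
        by omega, le_refl _,
        by have ha : (a : ℕ) < m := lt_of_lt_of_le a.isLt (min_le_left m n); omega,
        fun t ht1 ht2 => by split <;> omega,
        Or.inl ?_⟩, ?_, ?_⟩
      · intro t u ht htu hu
        split_ifs <;> omega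
      · intro a t u ht htu hu
        dsimp only [MonoPoly.Increasing] at *
        split_ifs <;> omega
      · intro k l hk hkm hl hln
        refine ⟨⟨k - 1, by omega⟩, ?_⟩
        simp only [MonoPoly.cells, Set.mem_setOf_eq]
        split_ifs <;> omega
    · -- min m n = n : cover by rows
      refine ⟨fun b => ⟨1, m, fun _ => b.val + 1,
        le_refl _, hm, le_refl _,
        fun t ht1 ht2 => by
          have hb : (b : ℕ) < n := lt_of_lt_of_le b.isLt (min_le_right m n)
          omega,
        Or.inl (fun t u _ _ _ => le_refl _)⟩, ?_, ?_⟩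
      · intro b t u _ _ _
        exact le_refl _
      · intro k l hk hkm hl hln
        refine ⟨⟨l - 1, by omega⟩, ?_⟩
        simp only [MonoPoly.cells, Set.mem_setOf_eq]
        omega
  · intro p hp
    obtain ⟨F, hinc, hcov⟩ := hp
    have hcell : ∀ j : Fin (min m n),
        ∃ a, (j.val + 1, min m n - j.val) ∈ (F a).cells := by
      intro j
      have := j.isLt
      exact hcov (j.val + 1) (min m n - j.val) (by omega) (by omega) (by omega) (by omega)
    choose g hg using hcell
    have hinj : Function.Injective g := by
      intro j j' hgj
      by_contra hne
      have hj := j.isLt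
      have hj' := j'.isLt
      rcases lt_trichotomy j.val j'.val with hlt | heq | hlt
      · have := inc_key (F (g j')) (hinc (g j')) (hgj ▸ hg j) (hg j') (by omega)
        omega
      · exact hne (Fin.ext heq)
      · have := inc_key (F (g j)) (hinc (g j)) (hgj ▸ hg j') (hg j) (by omega)
        omega
    have := Fintype.card_le_of_injective g hinj
    simpa using this
end

section
/- Let m, n, i be positive natural numbers and let I_1, …, I_i be increasing monotonous polyominoes in R_{m×n}. Then there exist mutually distinct increasing monotonous polyominoes I⁰, I¹, …, I^{i₁} in R_{m×n} with 0 ≤ i₁ < i, all fully defined on {0,…,m}, such that the union of the cell sets of I_1,…,I_i is contained in the union of the cell sets of I⁰, I¹, …, I^{i₁}, and moreover I^k(m) < I⁰(m) for every k = 1,…,i₁ (so the cell sets of I¹,…,I^{i₁} are contained in {1,…,m}×{1,…,I⁰(m)−1}). -/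
lemma incFull_congr {m n : ℕ} {f g : ℕ → ℕ} (h : ∀ t, t ≤ m → f t = g t)
    (hf : IncFull m n f) : IncFull m n g := by
  constructor
  · intro t ht
    rw [← h t ht]
    exact hf.1 t ht
  · intro t u htu hum
    rw [← h t (le_trans htu hum), ← h u hum]
    exact hf.2 t u htu hum

lemma cellsFull_congr {m : ℕ} {f g : ℕ → ℕ} (h : ∀ t, t ≤ m → f t = g t) :
    cellsFull m f = cellsFull m g := by
  ext c
  simp only [cellsFull, Set.mem_setOf_eq]
  constructor <;> rintro ⟨h1, h2, h3, h4⟩ <;>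
    refine ⟨h1, h2, ?_, ?_⟩
  · rw [← h (c.1 - 1) (by omega)]; exact h3
  · rw [← h c.1 h2]; exact h4
  · rw [h (c.1 - 1) (by omega)]; exact h3
  · rw [h c.1 h2]; exact h4

noncomputable def ostat (i : ℕ) (f : Fin i → ℕ → ℕ) (j t : ℕ) : ℕ :=
  sInf {v | j < (Finset.univ.filter (fun b => f b t ≤ v)).card}

open Finset in
lemma ostat_le_iff (i : ℕ) (f : Fin i → ℕ → ℕ) {j : ℕ} (hj : j < i) (t v : ℕ) :
    ostat i f j t ≤ v ↔ j < (Finset.univ.filter (fun b => f b t ≤ v)).card := by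
  have hmono : ∀ v w : ℕ, v ≤ w → j < (univ.filter (fun b => f b t ≤ v)).card →
      j < (univ.filter (fun b => f b t ≤ w)).card := by
    intro v w hvw h
    exact h.trans_le (Finset.card_le_card (fun b hb => by
      simp only [mem_filter, mem_univ, true_and] at *
      exact hb.trans hvw))
  have hne : {v : ℕ | j < (univ.filter (fun b => f b t ≤ v)).card}.Nonempty := by
    refine ⟨Finset.univ.sup (fun b => f b t), ?_⟩
    have hu : (univ.filter (fun b => f b t ≤ univ.sup (fun b => f b t))) = univ := by
      apply Finset.filter_true_of_mem
      intro b _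
      exact Finset.le_sup (f := fun b => f b t) (mem_univ b)
    simp only [Set.mem_setOf_eq, hu, card_univ, Fintype.card_fin]
    exact hj
  constructor
  · intro h
    exact hmono _ _ h (Nat.sInf_mem hne)
  · intro h
    exact Nat.sInf_le h

open Finset in
lemma ostat_self (i : ℕ) (f : Fin i → ℕ → ℕ) {j : ℕ} (hj : j < i) (t : ℕ) :
    j < (Finset.univ.filter (fun b => f b t ≤ ostat i f j t)).card :=
  (ostat_le_iff i f hj t _).mp le_rfl

open Finset in
lemma ostat_mono_j (i : ℕ) (f : Fin i → ℕ → ℕ) {j j' : ℕ} (hj' : j' ≤ j) (hj : j < i)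
    (t : ℕ) : ostat i f j' t ≤ ostat i f j t :=
  (ostat_le_iff i f (lt_of_le_of_lt hj' hj) t _).mpr
    (lt_of_le_of_lt hj' (ostat_self i f hj t))

open Finset in
lemma ostat_incfull {m n i : ℕ} (f : Fin i → ℕ → ℕ) (hf : ∀ a, IncFull m n (f a))
    {j : ℕ} (hj : j < i) : IncFull m n (ostat i f j) := by
  constructor
  · intro t ht
    constructor
    · by_contra h
      push_neg at h
      have h0 : ostat i f j t ≤ 0 := by omega
      rw [ostat_le_iff i f hj] at h0
      have he : (univ.filter (fun b => f b t ≤ 0)) = ∅ := by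
        apply Finset.filter_false_of_mem
        intro b _
        have := ((hf b).1 t ht).1
        omega
      rw [he] at h0
      simp at h0
    · rw [ostat_le_iff i f hj]
      have hu : (univ.filter (fun b => f b t ≤ n)) = univ := by
        apply Finset.filter_true_of_mem
        intro b _
        exact ((hf b).1 t ht).2
      rw [hu]
      simpa using hj
  · intro t u htu hu
    rw [ostat_le_iff i f hj]
    refine lt_of_lt_of_le (ostat_self i f hj u) (Finset.card_le_card ?_)
    intro b hb
    simp only [mem_filter, mem_univ, true_and] at *
    exact le_trans ((hf b).2 t u htu hu) hb

open Finset in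
lemma ostat_cover {m n i : ℕ} (f : Fin i → ℕ → ℕ) (hf : ∀ a, IncFull m n (f a))
    (a : Fin i) {t c : ℕ} (h1 : 1 ≤ t) (h2 : t ≤ m) (h3 : f a (t - 1) ≤ c)
    (h4 : c ≤ f a t) :
    ∃ j, j < i ∧ ostat i f j (t - 1) ≤ c ∧ c ≤ ostat i f j t := by
  have hc1 : 1 ≤ c := le_trans ((hf a).1 (t - 1) (by omega)).1 h3
  set j := (univ.filter (fun b => f b t ≤ c - 1)).card with hjdef
  have hanot : a ∉ univ.filter (fun b => f b t ≤ c - 1) := by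
    simp only [mem_filter, mem_univ, true_and]
    omega
  have hji : j < i := by
    have := Finset.card_lt_card ((Finset.ssubset_iff_of_subset
      (Finset.subset_univ _)).mpr ⟨a, mem_univ a, hanot⟩)
    simpa using this
  refine ⟨j, hji, ?_, ?_⟩
  · rw [ostat_le_iff i f hji]
    apply Finset.card_lt_card
    rw [Finset.ssubset_iff_of_subset]
    · exact ⟨a, by simp only [mem_filter, mem_univ, true_and]; exact h3, hanot⟩
    · intro b hb
      simp only [mem_filter, mem_univ, true_and] at *
      have := (hf b).2 (t - 1) t (by omega) h2
      omega
  · by_contra h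
    push_neg at h
    have h0 : ostat i f j t ≤ c - 1 := by omega
    rw [ostat_le_iff i f hji] at h0
    omega

/-- Given increasing polyominoes `I₁,…,I_i ⊆ R_{m×n}`, there are mutually
distinct increasing polyominoes `I⁰,…,I^{i₁}` (with `i₁ < i`), fully defined on
`{0,…,m}`, covering all of them, with `I^k(m) < I⁰(m)` for `k = 1,…,i₁`. -/
theorem stmt6 (m n i : ℕ) (hm : 1 ≤ m) (hn : 1 ≤ n) (hi : 1 ≤ i)
    (I : Fin i → MonoPoly m n) (hI : ∀ a, (I a).Increasing) :
    ∃ i₁ : ℕ, i₁ < i ∧ ∃ Q : Fin (i₁ + 1) → (ℕ → ℕ),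
      (∀ a, IncFull m n (Q a)) ∧
      (∀ a b, a ≠ b → ∃ t, t ≤ m ∧ Q a t ≠ Q b t) ∧
      ((⋃ a, (I a).cells) ⊆ ⋃ a, cellsFull m (Q a)) ∧
      (∀ a : Fin (i₁ + 1), a ≠ 0 → Q a m < Q 0 m) := by
  classical
  -- Step 1: full extensions of the given polyominoes
  set f : Fin i → ℕ → ℕ :=
    fun a t => (I a).P (min (max t ((I a).r - 1)) (I a).s) with hfdef
  have hfinc : ∀ a, IncFull m n (f a) := by
    intro a
    constructor
    · intro t _
      apply (I a).val_mem
      · exact le_min (le_max_right _ _) (le_trans (Nat.sub_le _ _) (I a).r_le_s)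
      · exact min_le_right _ _
    · intro t u htu _
      apply hI a
      · exact le_min (le_max_right _ _) (le_trans (Nat.sub_le _ _) (I a).r_le_s)
      · omega
      · exact min_le_right _ _
  have hcell : ∀ a, (I a).cells ⊆ cellsFull m (f a) := by
    intro a c hc
    obtain ⟨h1, h2, h3, h4⟩ := hc
    have hPm : (I a).P (c.1 - 1) ≤ (I a).P c.1 :=
      hI a (c.1 - 1) c.1 (by omega) (Nat.sub_le _ _) h2
    rw [min_eq_left hPm] at h3
    rw [max_eq_right hPm] at h4
    have hr := (I a).one_le_r
    have e1 : min (max (c.1 - 1) ((I a).r - 1)) (I a).s = c.1 - 1 := by omega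
    have e2 : min (max c.1 ((I a).r - 1)) (I a).s = c.1 := by omega
    refine ⟨le_trans hr h1, le_trans h2 (I a).s_le_m, ?_, ?_⟩
    · show (I a).P _ ≤ c.2
      rw [e1]
      exact h3
    · show c.2 ≤ (I a).P _
      rw [e2]
      exact h4
  -- Step 2: order statistics
  have htop : i - 1 < i := by omega
  set g : ℕ → ℕ → ℕ := fun j => ostat i f j with hgdef
  have hginc : ∀ j, j < i → IncFull m n (g j) := fun j hj => ostat_incfull f hfinc hj
  set V : ℕ := g (i - 1) m with hVdef
  have hV1 : 1 ≤ V := ((hginc _ htop).1 m le_rfl).1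
  -- coverage goes into the order statistics
  have hcov : (⋃ a, (I a).cells) ⊆ ⋃ j : Fin i, cellsFull m (g j) := by
    intro c hc
    rw [Set.mem_iUnion] at hc ⊢
    obtain ⟨a, hca⟩ := hc
    obtain ⟨h1, h2, h3, h4⟩ := hcell a hca
    obtain ⟨j, hj, hj1, hj2⟩ := ostat_cover f hfinc a h1 h2 h3 h4
    exact ⟨⟨j, hj⟩, h1, h2, hj1, hj2⟩
  by_cases hVle : V ≤ 1
  · -- all functions are constant 1 on [0,m]; a single polyomino suffices
    have hone : ∀ x y : Fin (0 + 1), x = y := by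
      intro x y
      have hx := x.isLt
      have hy := y.isLt
      exact Fin.ext (by omega)
    refine ⟨0, hi, fun _ => g (i - 1), fun _ => hginc _ htop, ?_, ?_, ?_⟩
    · intro a b hab
      exact absurd (hone a b) hab
    · intro c hc
      have hall : ∀ j t, j < i → t ≤ m → g j t = 1 := by
        intro j t hj ht
        have hle : g j t ≤ g (i - 1) t := ostat_mono_j i f (by omega) htop t
        have hle2 : g (i - 1) t ≤ V := (hginc _ htop).2 t m ht le_rfl
        have hge : 1 ≤ g j t := ((hginc _ hj).1 t ht).1
        omega
      obtain ⟨j, hcj⟩ := Set.mem_iUnion.mp (hcov hc)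
      obtain ⟨h1, h2, h3, h4⟩ := hcj
      rw [Set.mem_iUnion]
      refine ⟨0, ?_⟩
      show c ∈ cellsFull m (g (i - 1))
      refine ⟨h1, h2, ?_, ?_⟩
      · rw [hall (i - 1) (c.1 - 1) htop (by omega)]
        rw [hall j (c.1 - 1) j.isLt (by omega)] at h3
        exact h3
      · rw [hall (i - 1) c.1 htop h2]
        rw [hall j c.1 j.isLt h2] at h4
        exact h4
    · intro a ha
      exact absurd (hone a 0) ha
  · -- V ≥ 2 : cap everything below V, deduplicate
    have hV2 : 2 ≤ V := by omega
    set h : ℕ → ℕ → ℕ := fun j t => min (g j t) (V - 1) with hhdef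
    have hhinc : ∀ j, j < i → IncFull m n (h j) := by
      intro j hj
      constructor
      · intro t ht
        have := (hginc j hj).1 t ht
        constructor
        · simp only [hhdef, le_min_iff]
          omega
        · exact le_trans (min_le_left _ _) this.2
      · intro t u htu hum
        exact min_le_min ((hginc j hj).2 t u htu hum) le_rfl
    set S : Finset (Fin (m + 1) → ℕ) :=
      (Finset.range (i - 1)).image (fun j => fun t : Fin (m + 1) => h j t.val)
      with hSdef
    have hk : S.card ≤ i - 1 := le_trans Finset.card_image_le (by simp)
    set e := S.equivFin with hedef
    set eS : Fin S.card → (Fin (m + 1) → ℕ) := fun a => (e.symm a).1 with heSdef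
    set Q : Fin (S.card + 1) → ℕ → ℕ :=
      fun a => Fin.cases (g (i - 1)) (fun a' t => eS a' ⟨min t m, by omega⟩) a
      with hQdef
    have hQ0 : Q 0 = g (i - 1) := by simp [hQdef]
    have hQw : ∀ (x : Fin S.card) (w : Fin (m + 1)), Q x.succ (w : ℕ) = eS x w := by
      intro x w
      simp only [hQdef, Fin.cases_succ]
      exact congrArg _ (Fin.ext (by show min (w : ℕ) m = (w : ℕ); have := w.isLt; omega))
    -- representation of nonzero Q's by capped functions
    have hrep : ∀ a' : Fin S.card,
        ∃ j, j < i - 1 ∧ ∀ t, t ≤ m → Q a'.succ t = h j t := by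
      intro a'
      have hmem := (e.symm a').2
      obtain ⟨j, hj, hje⟩ := Finset.mem_image.mp hmem
      refine ⟨j, Finset.mem_range.mp hj, ?_⟩
      intro t ht
      exact (hQw a' ⟨t, by omega⟩).trans ((congrFun hje ⟨t, by omega⟩).symm)
    -- each capped function is some nonzero Q
    have hrep' : ∀ j, j < i - 1 →
        ∃ a' : Fin S.card, ∀ t, t ≤ m → Q a'.succ t = h j t := by
      intro j hj
      have hmem : (fun t : Fin (m + 1) => h j t.val) ∈ S :=
        Finset.mem_image_of_mem _ (Finset.mem_range.mpr hj)
      refine ⟨e ⟨_, hmem⟩, ?_⟩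
      intro t ht
      have h2 : eS (e ⟨_, hmem⟩) = fun t : Fin (m + 1) => h j t.val := by
        show ((e.symm (e ⟨_, hmem⟩) : {x // x ∈ S}) : Fin (m + 1) → ℕ) = _
        rw [Equiv.symm_apply_apply]
      exact (hQw _ ⟨t, by omega⟩).trans (congrFun h2 ⟨t, by omega⟩)
    have hQlt : ∀ a : Fin (S.card + 1), a ≠ 0 → Q a m < Q 0 m := by
      intro a ha
      obtain ⟨a', rfl⟩ := Fin.eq_succ_of_ne_zero ha
      obtain ⟨j, hj, hjt⟩ := hrep a'
      rw [hjt m le_rfl, hQ0]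
      have hle : h j m ≤ V - 1 := min_le_right _ _
      show h j m < V
      omega
    refine ⟨S.card, by omega, Q, ?_, ?_, ?_, hQlt⟩
    · -- IncFull
      intro a
      by_cases ha : a = 0
      · rw [ha, hQ0]
        exact hginc _ htop
      · obtain ⟨a', rfl⟩ := Fin.eq_succ_of_ne_zero ha
        obtain ⟨j, hj, hjt⟩ := hrep a'
        exact incFull_congr (fun t ht => (hjt t ht).symm) (hhinc j (by omega))
    · -- distinctness
      intro a b hab
      by_cases ha : a = 0
      · have hb : b ≠ 0 := fun hb0 => hab (ha.trans hb0.symm)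
        refine ⟨m, le_rfl, ?_⟩
        rw [ha]
        exact (hQlt b hb).ne'
      · by_cases hb : b = 0
        · refine ⟨m, le_rfl, ?_⟩
          rw [hb]
          exact (hQlt a ha).ne
        · obtain ⟨a', rfl⟩ := Fin.eq_succ_of_ne_zero ha
          obtain ⟨b', rfl⟩ := Fin.eq_succ_of_ne_zero hb
          have hab' : a' ≠ b' := fun hEq => hab (congrArg Fin.succ hEq)
          have hne : eS a' ≠ eS b' := by
            intro hEq
            exact hab' (e.symm.injective (Subtype.ext hEq))
          obtain ⟨w, hw⟩ := Function.ne_iff.mp hne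
          refine ⟨(w : ℕ), by have := w.isLt; omega, ?_⟩
          rw [hQw a' w, hQw b' w]
          exact hw
    · -- coverage
      intro c hc
      obtain ⟨jj, hcj⟩ := Set.mem_iUnion.mp (hcov hc)
      obtain ⟨h1, h2, h3, h4⟩ := hcj
      rw [Set.mem_iUnion]
      have hji : (jj : ℕ) < i := jj.isLt
      have hc2top : c.2 ≤ g (i - 1) c.1 :=
        le_trans h4 (ostat_mono_j i f (by omega) htop c.1)
      by_cases hjt : (jj : ℕ) < i - 1
      · by_cases hcV : c.2 ≤ V - 1
        · obtain ⟨a', hat⟩ := hrep' (jj : ℕ) hjt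
          refine ⟨a'.succ, ?_⟩
          show c ∈ cellsFull m (Q a'.succ)
          rw [cellsFull_congr (fun t ht => hat t ht)]
          refine ⟨h1, h2, ?_, ?_⟩
          · exact le_trans (min_le_left _ _) h3
          · exact le_min h4 hcV
        · refine ⟨0, ?_⟩
          show c ∈ cellsFull m (Q 0)
          rw [hQ0]
          refine ⟨h1, h2, ?_, hc2top⟩
          have hle : g (i - 1) (c.1 - 1) ≤ V :=
            (hginc _ htop).2 (c.1 - 1) m (by omega) le_rfl
          omega
      · have hjeq : (jj : ℕ) = i - 1 := by omega
        refine ⟨0, ?_⟩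
        show c ∈ cellsFull m (Q 0)
        rw [hQ0, ← hjeq]
        exact ⟨h1, h2, h3, h4⟩
end

section
/- Let m, n, i be positive natural numbers and let I_1, …, I_i be increasing monotonous polyominoes in R_{m×n}. Then there exist increasing monotonous polyominoes I'_1, …, I'_{i'} in R_{m×n} with i' ≤ i, all fully defined on {0,…,m}, such that the union of the cell sets of I_1,…,I_i is contained in the union of the cell sets of I'_1,…,I'_{i'}, and I'_1(m) > I'_2(m) > … > I'_{i'}(m). -/
section OrdStatAux

variable {n i : ℕ}

def cnt (f : Fin i → ℕ → ℕ) (t ℓ : ℕ) : ℕ :=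
  (Finset.univ.filter fun a => ℓ ≤ f a t).card

lemma cnt_anti (f : Fin i → ℕ → ℕ) (t : ℕ) {ℓ ℓ' : ℕ} (h : ℓ ≤ ℓ') :
    cnt f t ℓ' ≤ cnt f t ℓ :=
  Finset.card_le_card (Finset.monotone_filter_right _ (fun _ _ ha => le_trans h ha))

lemma cnt_zero (f : Fin i → ℕ → ℕ) (t : ℕ) : cnt f t 0 = i := by simp [cnt]

noncomputable def ordStat (f : Fin i → ℕ → ℕ) (j t : ℕ) : ℕ :=
  sSup {ℓ : ℕ | j + 1 ≤ cnt f t ℓ}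

variable {f : Fin i → ℕ → ℕ}

lemma ordStat_bdd (hb : ∀ a t, f a t ≤ n) (j t : ℕ) :
    BddAbove {ℓ : ℕ | j + 1 ≤ cnt f t ℓ} := by
  refine ⟨n, fun ℓ hℓ => ?_⟩
  have h1 : 1 ≤ cnt f t ℓ := le_trans (Nat.succ_le_succ (Nat.zero_le _)) hℓ
  obtain ⟨a, ha⟩ := Finset.card_pos.mp h1
  exact le_trans (Finset.mem_filter.mp ha).2 (hb a t)

lemma ordStat_mem (hb : ∀ a t, f a t ≤ n) {j : ℕ} (hj : j < i) (t : ℕ) :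
    j + 1 ≤ cnt f t (ordStat f j t) := by
  have hne : {ℓ : ℕ | j + 1 ≤ cnt f t ℓ}.Nonempty := ⟨0, by simpa [cnt_zero f t] using hj⟩
  exact Nat.sSup_mem hne (ordStat_bdd hb j t)

lemma le_ordStat_iff (hb : ∀ a t, f a t ≤ n) {j : ℕ} (hj : j < i) {t ℓ : ℕ} :
    ℓ ≤ ordStat f j t ↔ j + 1 ≤ cnt f t ℓ := by
  constructor
  · intro h
    exact le_trans (ordStat_mem hb hj t) (cnt_anti f t h)
  · intro h
    exact le_csSup (ordStat_bdd hb j t) h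

lemma one_le_ordStat (hb : ∀ a t, f a t ≤ n) (h1 : ∀ a t, 1 ≤ f a t)
    {j : ℕ} (hj : j < i) (t : ℕ) : 1 ≤ ordStat f j t := by
  rw [le_ordStat_iff hb hj]
  have : (Finset.univ.filter fun a => 1 ≤ f a t) = Finset.univ :=
    Finset.filter_true_of_mem fun a _ => h1 a t
  simpa [cnt, this] using hj

lemma ordStat_le (hb : ∀ a t, f a t ≤ n) {j : ℕ} (hj : j < i) (t : ℕ) :
    ordStat f j t ≤ n := by
  have h1 : 1 ≤ cnt f t (ordStat f j t) :=
    le_trans (Nat.succ_le_succ (Nat.zero_le _)) (ordStat_mem hb hj t)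
  obtain ⟨a, ha⟩ := Finset.card_pos.mp h1
  exact le_trans (Finset.mem_filter.mp ha).2 (hb a t)

lemma ordStat_mono (hb : ∀ a t, f a t ≤ n) (hmono : ∀ a, Monotone (f a))
    {j : ℕ} (hj : j < i) {t u : ℕ} (htu : t ≤ u) :
    ordStat f j t ≤ ordStat f j u := by
  rw [le_ordStat_iff hb hj]
  refine le_trans (ordStat_mem hb hj t) (Finset.card_le_card ?_)
  intro a ha
  rw [Finset.mem_filter] at ha ⊢
  exact ⟨ha.1, le_trans ha.2 (hmono a htu)⟩

lemma ordStat_anti (hb : ∀ a t, f a t ≤ n) {j j' : ℕ} (hjj' : j ≤ j') (hj' : j' < i)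
    (t : ℕ) : ordStat f j' t ≤ ordStat f j t := by
  rw [le_ordStat_iff hb (lt_of_le_of_lt hjj' hj')]
  exact le_trans (Nat.add_le_add_right hjj' 1) (ordStat_mem hb hj' t)

/-- First covering step: each staircase `f a` is covered by the order-statistic
staircases. -/
lemma cover_ordStat (hb : ∀ a t, f a t ≤ n) (hmono : ∀ a, Monotone (f a))
    {m : ℕ} (a : Fin i) {k ℓ : ℕ}
    (hc : (k, ℓ) ∈ cellsFull m (f a)) :
    ∃ j : ℕ, j < i ∧ (k, ℓ) ∈ cellsFull m (fun t => ordStat f j t) := by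
  obtain ⟨hk1, hkm, hl1, hl2⟩ := hc
  simp only at hl1 hl2 hk1 hkm
  classical
  set c := cnt f k ℓ with hcdef
  have hamem : a ∈ Finset.univ.filter fun b => ℓ ≤ f b k := by simp [hl2]
  have hc1 : 1 ≤ c := Finset.card_pos.mpr ⟨a, hamem⟩
  have hci : c ≤ i := by
    exact le_trans (Finset.card_le_univ _) (by simp)
  refine ⟨c - 1, by omega, hk1, hkm, ?_, ?_⟩
  · show ordStat f (c - 1) (k - 1) ≤ ℓ
    by_contra hcon
    push_neg at hcon
    have h2 : ℓ + 1 ≤ ordStat f (c - 1) (k - 1) := hcon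
    rw [le_ordStat_iff hb (by omega : c - 1 < i)] at h2
    have hsub : (Finset.univ.filter fun b => ℓ + 1 ≤ f b (k - 1)) ⊆
        (Finset.univ.filter fun b => ℓ ≤ f b k).erase a := by
      intro b hbmem
      rw [Finset.mem_filter] at hbmem
      have hbk : ℓ + 1 ≤ f b k := le_trans hbmem.2 (hmono b (Nat.sub_le k 1))
      rw [Finset.mem_erase, Finset.mem_filter]
      refine ⟨?_, Finset.mem_univ _, by omega⟩
      rintro rfl
      have := hbmem.2
      omega
    have hcard : cnt f (k - 1) (ℓ + 1) ≤ c - 1 := by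
      have := Finset.card_le_card hsub
      rw [Finset.card_erase_of_mem hamem] at this
      exact this
    omega
  · show ℓ ≤ ordStat f (c - 1) k
    rw [le_ordStat_iff hb (by omega : c - 1 < i)]
    have : c - 1 + 1 = c := by omega
    rw [this]

/-- Endpoint-fixing sequence. -/
noncomputable def eseq (f : Fin i → ℕ → ℕ) (mm : ℕ) : ℕ → ℕ
  | 0 => ordStat f 0 mm
  | j + 1 => min (ordStat f (j + 1) mm) (eseq f mm j - 1)

variable {f : Fin i → ℕ → ℕ}

lemma eseq_le_ordStat (mm j : ℕ) : eseq f mm j ≤ ordStat f j mm := by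
  cases j with
  | zero => exact le_refl _
  | succ j => exact min_le_left _ _

lemma eseq_succ_le (mm j : ℕ) : eseq f mm (j + 1) ≤ eseq f mm j - 1 :=
  min_le_right _ _

lemma eseq_anti (mm : ℕ) : Antitone (eseq f mm) :=
  antitone_nat_of_succ_le fun j => le_trans (eseq_succ_le mm j) (Nat.sub_le _ _)

lemma eseq_le_sub (mm j : ℕ) : eseq f mm j ≤ eseq f mm 0 - j := by
  induction j with
  | zero => simp
  | succ j ih =>
    have := eseq_succ_le (f := f) mm j
    omega

/-- Second covering step: a cell of `ordStat f j` lying strictly above the fixed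
endpoint `eseq f m j` is picked up by an earlier index whose fixed endpoint is
exactly `ℓ`. -/
lemma cover_fix (hb : ∀ a t, f a t ≤ n) (hmono : ∀ a, Monotone (f a)) {m : ℕ} :
    ∀ j, j < i → ∀ k ℓ : ℕ, k ≤ m → 1 ≤ ℓ → ℓ ≤ ordStat f j k →
      eseq f m j < ℓ →
      ∃ j', j' < j ∧ eseq f m j' = ℓ ∧ ℓ ≤ ordStat f j' k := by
  intro j
  induction j using Nat.strong_induction_on with
  | _ j ih =>
    intro hj k ℓ hkm hl1 hlg hle
    have hgm : ℓ ≤ ordStat f j m :=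
      le_trans hlg (ordStat_mono hb hmono hj hkm)
    match j with
    | 0 =>
      exfalso
      have h0 : eseq f m 0 = ordStat f 0 m := rfl
      rw [h0] at hle
      omega
    | j'' + 1 =>
      have he : eseq f m (j'' + 1) = min (ordStat f (j'' + 1) m) (eseq f m j'' - 1) := rfl
      have hlt : eseq f m j'' - 1 < ℓ := by
        rw [he] at hle
        omega
      have hle'' : eseq f m j'' ≤ ℓ := by omega
      have hgk'' : ℓ ≤ ordStat f j'' k :=
        le_trans hlg (ordStat_anti hb (Nat.le_succ _) hj k)
      rcases lt_or_eq_of_le hle'' with h | h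
      · obtain ⟨j', hj'1, hj'2, hj'3⟩ :=
          ih j'' (Nat.lt_succ_self _) (by omega) k ℓ hkm hl1 hgk'' h
        exact ⟨j', by omega, hj'2, hj'3⟩
      · exact ⟨j'', Nat.lt_succ_self _, h, hgk''⟩

end OrdStatAux

/-- Given increasing polyominoes `I₁,…,I_i ⊆ R_{m×n}`, there are increasing
polyominoes `I'₁,…,I'_{i'}` (with `i' ≤ i`), fully defined on `{0,…,m}`,
covering all of them, with `I'₁(m) > I'₂(m) > … > I'_{i'}(m)`. -/
theorem stmt7 (m n i : ℕ) (hm : 1 ≤ m) (hn : 1 ≤ n) (hi : 1 ≤ i)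
    (I : Fin i → MonoPoly m n) (hI : ∀ a, (I a).Increasing) :
    ∃ i' : ℕ, i' ≤ i ∧ ∃ Q : Fin i' → (ℕ → ℕ),
      (∀ a, IncFull m n (Q a)) ∧
      ((⋃ a, (I a).cells) ⊆ ⋃ a, cellsFull m (Q a)) ∧
      (∀ a b : Fin i', a < b → Q b m < Q a m) := by
  classical
  -- the extension of each polyomino to a full one, by clamping the argument
  set f : Fin i → ℕ → ℕ :=
    fun a t => (I a).P (max ((I a).r - 1) (min t (I a).s)) with hfdef
  have hclamp : ∀ (a : Fin i) (t : ℕ),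
      (I a).r - 1 ≤ max ((I a).r - 1) (min t (I a).s) ∧
      max ((I a).r - 1) (min t (I a).s) ≤ (I a).s := by
    intro a t
    have h1 := (I a).r_le_s
    omega
  have hb : ∀ a t, f a t ≤ n := fun a t =>
    ((I a).val_mem _ (hclamp a t).1 (hclamp a t).2).2
  have h1 : ∀ a t, 1 ≤ f a t := fun a t =>
    ((I a).val_mem _ (hclamp a t).1 (hclamp a t).2).1
  have hmono : ∀ a, Monotone (f a) := by
    intro a t u htu
    exact hI a _ _ (hclamp a t).1 (by omega) (hclamp a u).2
  have hcellsub : ∀ a, (I a).cells ⊆ cellsFull m (f a) := by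
    rintro a ⟨k, ℓ⟩ hc
    obtain ⟨hrk, hks, hmin, hmax⟩ := hc
    simp only at hrk hks hmin hmax
    have hr1 := (I a).one_le_r
    have hsm := (I a).s_le_m
    have hPm : (I a).P (k - 1) ≤ (I a).P k :=
      hI a (k - 1) k (by omega) (by omega) hks
    have hq1 : max ((I a).r - 1) (min (k - 1) (I a).s) = k - 1 := by omega
    have hq2 : max ((I a).r - 1) (min k (I a).s) = k := by omega
    refine ⟨by omega, by omega, ?_, ?_⟩
    · show f a (k - 1) ≤ ℓ
      rw [hfdef]
      simp only [hq1]
      omega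
    · show ℓ ≤ f a k
      rw [hfdef]
      simp only [hq2]
      omega
  -- the endpoint sequence and its first zero
  have hzne : {j : ℕ | eseq f m j = 0}.Nonempty := by
    refine ⟨eseq f m 0, ?_⟩
    have := eseq_le_sub (f := f) m (eseq f m 0)
    show eseq f m (eseq f m 0) = 0
    omega
  set z : ℕ := sInf {j : ℕ | eseq f m j = 0} with hzdef
  have hz0 : eseq f m z = 0 := Nat.sInf_mem hzne
  have hlt_z : ∀ j, 1 ≤ eseq f m j → j < z := by
    intro j hj
    by_contra hcon
    push_neg at hcon
    have := eseq_anti (f := f) m hcon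
    omega
  have hz_lt : ∀ j, j < z → 1 ≤ eseq f m j := by
    intro j hj
    by_contra hcon
    push_neg at hcon
    have h0 : eseq f m j = 0 := by omega
    have : z ≤ j := Nat.sInf_le h0
    omega
  -- the final family
  refine ⟨min i z, Nat.min_le_left _ _,
    fun j => fun t => min (ordStat f (j : ℕ) t) (eseq f m (j : ℕ)), ?_, ?_, ?_⟩
  · -- IncFull
    intro j
    have hji : (j : ℕ) < i := lt_of_lt_of_le j.2 (Nat.min_le_left _ _)
    have hjz : (j : ℕ) < z := lt_of_lt_of_le j.2 (Nat.min_le_right _ _)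
    constructor
    · intro t _
      constructor
      · exact le_min (one_le_ordStat hb h1 hji t) (hz_lt _ hjz)
      · exact le_trans (min_le_left _ _) (ordStat_le hb hji t)
    · intro t u htu _
      exact min_le_min (ordStat_mono hb hmono hji htu) (le_refl _)
  · -- covering
    rintro ⟨k, ℓ⟩ hc
    rw [Set.mem_iUnion] at hc
    obtain ⟨a, hca⟩ := hc
    obtain ⟨j, hji, hcellj⟩ := cover_ordStat hb hmono a (hcellsub a hca)
    obtain ⟨hk1, hkm, hgl, hlg⟩ := hcellj
    simp only at hk1 hkm hgl hlg
    have hl1 : 1 ≤ ℓ := le_trans (one_le_ordStat hb h1 hji (k - 1)) hgl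
    rw [Set.mem_iUnion]
    by_cases hcase : ℓ ≤ eseq f m j
    · have hjz : j < z := hlt_z j (by omega)
      refine ⟨⟨j, by omega⟩, by omega, by omega, ?_, ?_⟩
      · exact le_trans (min_le_left _ _) hgl
      · exact le_min hlg hcase
    · push_neg at hcase
      obtain ⟨j', hj'j, hej', hgj'⟩ :=
        cover_fix hb hmono j hji k ℓ hkm hl1 hlg hcase
      have hjz' : j' < z := hlt_z j' (by omega)
      refine ⟨⟨j', by omega⟩, by omega, by omega, ?_, ?_⟩
      · show min (ordStat f j' (k - 1)) (eseq f m j') ≤ ℓ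
        omega
      · show ℓ ≤ min (ordStat f j' k) (eseq f m j')
        exact le_min hgj' (by omega)
  · -- strictly decreasing endpoints
    intro a b hab
    have hbz : (b : ℕ) < z := lt_of_lt_of_le b.2 (Nat.min_le_right _ _)
    have haz : (a : ℕ) < z := lt_trans (show (a : ℕ) < (b : ℕ) from hab) hbz
    have hQa : min (ordStat f (a : ℕ) m) (eseq f m (a : ℕ)) = eseq f m (a : ℕ) :=
      min_eq_right (eseq_le_ordStat m _)
    have hQb : min (ordStat f (b : ℕ) m) (eseq f m (b : ℕ)) = eseq f m (b : ℕ) :=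
      min_eq_right (eseq_le_ordStat m _)
    show min (ordStat f (b : ℕ) m) (eseq f m (b : ℕ)) <
      min (ordStat f (a : ℕ) m) (eseq f m (a : ℕ))
    rw [hQa, hQb]
    have h1a : 1 ≤ eseq f m (a : ℕ) := hz_lt _ haz
    have hstep : eseq f m ((a : ℕ) + 1) ≤ eseq f m (a : ℕ) - 1 := eseq_succ_le m _
    have hmono' : eseq f m (b : ℕ) ≤ eseq f m ((a : ℕ) + 1) :=
      eseq_anti (f := f) m (by omega : (a : ℕ) + 1 ≤ (b : ℕ))
    omega
end

section
/- Let I, J : {0,…,m} → {1,…,n} be nondecreasing functions encoding increasing monotonous polyominoes in R_{m×n} with I(m) ≠ J(m). Define L, U : {0,…,m} → {1,…,n} by L(k) := min{I(k), J(k)}, U(m) := max{I(m), J(m)}, and U(k) := max{I(k), J(k), min{I(k+1), J(k+1)} + 1} for k < m. Then: (i) L and U are nondecreasing (so they encode increasing monotonous polyominoes fully defined on {0,…,m}); (ii) the union of the cell sets of I and J is contained in the union of the cell sets of L and U, which in turn lies in {1,…,m}×{1,…,n}; (iii) L(k) < U(k−1) for k = 1,…,m, so the cell sets of L and U are disjoint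 and L lies strictly below U. -/
lemma step_mono' (m : ℕ) (f : ℕ → ℕ) (h : ∀ k, k < m → f k ≤ f (k + 1)) :
    ∀ t u, t ≤ u → u ≤ m → f t ≤ f u := by
  intro t u htu hum
  induction u with
  | zero => obtain rfl : t = 0 := Nat.le_zero.mp htu; exact le_rfl
  | succ u ih =>
    rcases Nat.eq_or_lt_of_le htu with rfl | hlt
    · exact le_rfl
    · exact le_trans (ih (Nat.lt_succ_iff.mp hlt) (by omega)) (h u (by omega))

lemma cover_aux (m : ℕ) (I J L U : ℕ → ℕ)
    (hL : ∀ k, k ≤ m → L k = min (I k) (J k))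
    (hUm : U m = max (I m) (J m))
    (hU : ∀ k, k < m → U k = max (max (I k) (J k)) (min (I (k + 1)) (J (k + 1)) + 1))
    (hJmono : ∀ t u, t ≤ u → u ≤ m → J t ≤ J u) :
    cellsFull m I ⊆ cellsFull m L ∪ cellsFull m U := by
  rintro ⟨k, j⟩ hc
  simp only [cellsFull, Set.mem_setOf_eq] at hc
  obtain ⟨h1, h2, h3, h4⟩ := hc
  simp only [cellsFull, Set.mem_union, Set.mem_setOf_eq]
  have hk1 : k - 1 < m := by omega
  have hk1' : k - 1 + 1 = k := by omega
  have e1 := hL (k - 1) (by omega)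
  have e2 := hL k h2
  have e3 := hU (k - 1) hk1
  rw [hk1'] at e3
  have hJ1 := hJmono (k - 1) k (by omega) h2
  by_cases hc : j ≤ min (I k) (J k)
  · left; exact ⟨h1, h2, by omega, by omega⟩
  · right
    refine ⟨h1, h2, by omega, ?_⟩
    rcases Nat.eq_or_lt_of_le h2 with rfl | hlt
    · rw [hUm]; omega
    · rw [hU k hlt]; omega

/-- Lemma on merging two increasing polyominoes: for nondecreasing
`I, J : {0,…,m} → {1,…,n}` with `I(m) ≠ J(m)`, the functions `L` and `U`
defined below are nondecreasing, cover `I ∪ J` inside `R_{m×n}`, and `L` lies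
strictly below `U` without overlap. -/
theorem stmt8 (m n : ℕ) (hm : 1 ≤ m) (hn : 1 ≤ n)
    (I J : ℕ → ℕ) (hI : IncFull m n I) (hJ : IncFull m n J)
    (hne : I m ≠ J m) (L U : ℕ → ℕ)
    (hL : ∀ k, k ≤ m → L k = min (I k) (J k))
    (hUm : U m = max (I m) (J m))
    (hU : ∀ k, k < m → U k = max (max (I k) (J k)) (min (I (k + 1)) (J (k + 1)) + 1)) :
    (IncFull m n L ∧ IncFull m n U) ∧
    (cellsFull m I ∪ cellsFull m J ⊆ cellsFull m L ∪ cellsFull m U ∧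
      cellsFull m L ∪ cellsFull m U ⊆
        {c : ℕ × ℕ | 1 ≤ c.1 ∧ c.1 ≤ m ∧ 1 ≤ c.2 ∧ c.2 ≤ n}) ∧
    ((∀ k, 1 ≤ k → k ≤ m → L k < U (k - 1)) ∧
      Disjoint (cellsFull m L) (cellsFull m U)) := by
  obtain ⟨hIb, hImono⟩ := hI
  obtain ⟨hJb, hJmono⟩ := hJ
  have hIm := hIb m le_rfl
  have hJm := hJb m le_rfl
  have hLb : ∀ k, k ≤ m → 1 ≤ L k ∧ L k ≤ n := by
    intro k hk; rw [hL k hk]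
    have h1 := hIb k hk; have h2 := hJb k hk; omega
  have hUb : ∀ k, k ≤ m → 1 ≤ U k ∧ U k ≤ n := by
    intro k hk
    rcases Nat.eq_or_lt_of_le hk with rfl | hk'
    · rw [hUm]; omega
    · rw [hU k hk']
      have h1 := hIb k (by omega)
      have h2 := hJb k (by omega)
      have h3 := hImono (k + 1) m (by omega) le_rfl
      have h4 := hJmono (k + 1) m (by omega) le_rfl
      omega
  have hLmono : ∀ t u, t ≤ u → u ≤ m → L t ≤ L u := by
    intro t u htu hum
    rw [hL t (le_trans htu hum), hL u hum]
    have := hImono t u htu hum; have := hJmono t u htu hum; omega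
  have hUstep : ∀ k, k < m → U k ≤ U (k + 1) := by
    intro k hk
    rw [hU k hk]
    rcases Nat.eq_or_lt_of_le (Nat.succ_le_of_lt hk) with he | hk'
    · have he' : k + 1 = m := by omega
      rw [he', hUm]
      have := hImono k m (by omega) le_rfl
      have := hJmono k m (by omega) le_rfl
      omega
    · rw [hU (k + 1) hk']
      have := hImono k (k + 1) (by omega) (by omega)
      have := hJmono k (k + 1) (by omega) (by omega)
      have := hImono (k + 1) (k + 1 + 1) (by omega) (by omega)
      have := hJmono (k + 1) (k + 1 + 1) (by omega) (by omega)
      omega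
  have hUmono := step_mono' m U hUstep
  have hLltU : ∀ k, 1 ≤ k → k ≤ m → L k < U (k - 1) := by
    intro k h1 h2
    rw [hL k h2, hU (k - 1) (by omega)]
    have hk1 : k - 1 + 1 = k := by omega
    rw [hk1]
    omega
  refine ⟨⟨⟨hLb, hLmono⟩, ⟨hUb, hUmono⟩⟩, ⟨?_, ?_⟩, hLltU, ?_⟩
  · have hL' : ∀ k, k ≤ m → L k = min (J k) (I k) := by
      intro k hk; rw [hL k hk, Nat.min_comm]
    have hUm' : U m = max (J m) (I m) := by rw [hUm, Nat.max_comm]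
    have hU' : ∀ k, k < m →
        U k = max (max (J k) (I k)) (min (J (k + 1)) (I (k + 1)) + 1) := by
      intro k hk; rw [hU k hk, Nat.max_comm (I k), Nat.min_comm]
    exact Set.union_subset (cover_aux m I J L U hL hUm hU hJmono)
      (cover_aux m J I L U hL' hUm' hU' hImono)
  · rintro ⟨k, j⟩ hc
    simp only [cellsFull, Set.mem_union, Set.mem_setOf_eq] at hc
    rcases hc with ⟨h1, h2, h3, h4⟩ | ⟨h1, h2, h3, h4⟩
    · have b1 := hLb (k - 1) (by omega)
      have b2 := hLb k h2
      exact ⟨h1, h2, by omega, by omega⟩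
    · have b1 := hUb (k - 1) (by omega)
      have b2 := hUb k h2
      exact ⟨h1, h2, by omega, by omega⟩
  · rw [Set.disjoint_left]
    rintro ⟨k, j⟩ hc hc'
    simp only [cellsFull, Set.mem_setOf_eq] at hc hc'
    obtain ⟨h1, h2, h3, h4⟩ := hc
    obtain ⟨_, _, h5, _⟩ := hc'
    have := hLltU k h1 h2
    omega
end

section
/- Let m, n, i be positive natural numbers and let I_1, …, I_i be increasing monotonous polyominoes in R_{m×n}. Then there exist increasing monotonous polyominoes I'_1, …, I'_{i'} in R_{m×n} with 0 ≤ i' ≤ i, all fully defined on {0,…,m}, whose cell sets are pairwise disjoint, such that the union of the cell sets of I_1,…,I_i is contained in the union of the cell sets of I'_1,…,I'_{i'}. -/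
namespace Stmt9Helper

/-- recursive stack builder: `auxH gq (a+1) t = max (gq (a+1) t) (auxH gq a (min (t+1) m) + 1)` -/
def auxH (m : ℕ) (gq : ℕ → ℕ → ℕ) : ℕ → ℕ → ℕ
  | 0, _ => 0
  | a+1, t => max (gq (a+1) t) (auxH m gq a (min (t+1) m) + 1)

lemma auxH_succ (m : ℕ) (gq : ℕ → ℕ → ℕ) (a t : ℕ) :
    auxH m gq (a+1) t = max (gq (a+1) t) (auxH m gq a (min (t+1) m) + 1) := rfl

variable {m : ℕ} {gq : ℕ → ℕ → ℕ}

lemma auxH_mono (hgq : ∀ a t u, t ≤ u → gq a t ≤ gq a u) (a : ℕ) :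
    ∀ t u, t ≤ u → auxH m gq a t ≤ auxH m gq a u := by
  induction a with
  | zero => intro t u _; exact le_rfl
  | succ a ih =>
    intro t u h
    exact max_le_max (hgq _ _ _ h)
      (Nat.succ_le_succ (ih _ _ (min_le_min (Nat.add_le_add_right h 1) le_rfl)))

lemma auxH_ceil {c : ℕ} (hub : ∀ a t, gq a t ≤ c + a) : ∀ a t, auxH m gq a t ≤ c + a := by
  intro a
  induction a with
  | zero => intro t; exact Nat.zero_le _
  | succ a ih =>
    intro t
    exact max_le (hub _ _) (by have := ih (min (t+1) m); omega)

lemma auxH_pos (a t : ℕ) : 1 ≤ auxH m gq (a+1) t :=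
  le_trans (Nat.succ_le_succ (Nat.zero_le _)) (le_max_right _ _)

lemma auxH_lb (a t : ℕ) : gq (a+1) t ≤ auxH m gq (a+1) t := le_max_left _ _

lemma auxH_idx_le (hgq : ∀ a t u, t ≤ u → gq a t ≤ gq a u) :
    ∀ a b t, a ≤ b → t ≤ m → auxH m gq a t ≤ auxH m gq b t := by
  intro a b
  induction b with
  | zero => intro t hab _; interval_cases a; exact le_rfl
  | succ b ih =>
    intro t hab htm
    rcases Nat.lt_or_ge a (b+1) with h | h
    · calc auxH m gq a t ≤ auxH m gq b t := ih t (by omega) htm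
        _ ≤ auxH m gq b (min (t+1) m) :=
            auxH_mono hgq b _ _ (le_min (Nat.le_succ t) htm)
        _ ≤ auxH m gq (b+1) t := le_trans (Nat.le_succ _) (le_max_right _ _)
    · have : a = b + 1 := by omega
      subst this; exact le_rfl

lemma auxH_sep (hgq : ∀ a t u, t ≤ u → gq a t ≤ gq a u) (a b t : ℕ)
    (hab : a + 1 ≤ b) (ht : 1 ≤ t) (htm : t ≤ m) :
    auxH m gq a t + 1 ≤ auxH m gq b (t-1) := by
  have h1 : auxH m gq a t + 1 ≤ auxH m gq (a+1) (t-1) := by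
    have hmin : min (t-1+1) m = t := by omega
    rw [auxH_succ, hmin]
    exact le_max_right _ _
  exact le_trans h1 (auxH_idx_le hgq (a+1) b (t-1) hab (by omega))

/-- extension of a polyomino's profile to a globally monotone function -/
def clampF {m n : ℕ} (Q : MonoPoly m n) (t : ℕ) : ℕ :=
  Q.P (min (max t (Q.r - 1)) Q.s)

lemma clamp_lb {m n : ℕ} (Q : MonoPoly m n) (t : ℕ) :
    Q.r - 1 ≤ min (max t (Q.r - 1)) Q.s :=
  le_min (le_max_right _ _) (le_trans (Nat.sub_le _ _) Q.r_le_s)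

lemma clamp_ub {m n : ℕ} (Q : MonoPoly m n) (t : ℕ) :
    min (max t (Q.r - 1)) Q.s ≤ Q.s := min_le_right _ _

lemma clampF_mono {m n : ℕ} (Q : MonoPoly m n) (hQ : Q.Increasing) {t u : ℕ} (htu : t ≤ u) :
    clampF Q t ≤ clampF Q u :=
  hQ _ _ (clamp_lb Q t) (min_le_min (max_le_max htu le_rfl) le_rfl) (clamp_ub Q u)

lemma clampF_bounds {m n : ℕ} (Q : MonoPoly m n) (t : ℕ) :
    1 ≤ clampF Q t ∧ clampF Q t ≤ n :=
  Q.val_mem _ (clamp_lb Q t) (clamp_ub Q t)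

lemma clampF_eq {m n : ℕ} (Q : MonoPoly m n) {t : ℕ} (h1 : Q.r - 1 ≤ t) (h2 : t ≤ Q.s) :
    clampF Q t = Q.P t := by
  unfold clampF
  rw [max_eq_left h1, min_eq_left h2]


section OrdStat

variable {i n : ℕ} (F : Fin i → ℕ → ℕ)

/-- number of profiles with value `≤ v` at position `t` -/
def cnt (t v : ℕ) : ℕ := (Finset.univ.filter fun b => F b t ≤ v).card

/-- the `a`-th smallest value among `F b t`, `b : Fin i` -/
noncomputable def ordStat (a t : ℕ) : ℕ := sInf {v | a ≤ cnt F t v}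

lemma cnt_le (t v : ℕ) : cnt F t v ≤ i := by
  simp only [cnt]
  exact le_trans (Finset.card_filter_le _ _) (by simp)

lemma cnt_top (hFub : ∀ b t, F b t ≤ n) (t : ℕ) : cnt F t n = i := by
  simp only [cnt]
  rw [Finset.filter_true_of_mem (fun b _ => hFub b t)]
  simp

lemma ordStat_mem (hFub : ∀ b t, F b t ≤ n) {a : ℕ} (hai : a ≤ i) (t : ℕ) :
    a ≤ cnt F t (ordStat F a t) :=
  Nat.sInf_mem (⟨n, by simp only [Set.mem_setOf_eq, cnt_top F hFub]; exact hai⟩ :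
    {v | a ≤ cnt F t v}.Nonempty)

lemma ordStat_pos (hFlb : ∀ b t, 1 ≤ F b t) (hFub : ∀ b t, F b t ≤ n)
    {a : ℕ} (ha1 : 1 ≤ a) (hai : a ≤ i) (t : ℕ) : 1 ≤ ordStat F a t := by
  by_contra h
  push_neg at h
  have h0 : ordStat F a t = 0 := by omega
  have hm := ordStat_mem F hFub hai t
  rw [h0] at hm
  have hz : cnt F t 0 = 0 := by
    simp only [cnt]
    rw [Finset.card_eq_zero, Finset.filter_eq_empty_iff]
    intro b _
    have := hFlb b t
    omega
  omega

lemma ordStat_le (hFub : ∀ b t, F b t ≤ n) {a : ℕ} (hai : a ≤ i) (t : ℕ) :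
    ordStat F a t ≤ n :=
  Nat.sInf_le (by simp only [Set.mem_setOf_eq, cnt_top F hFub]; exact hai)

lemma cnt_anti (hFmono : ∀ b t u, t ≤ u → F b t ≤ F b u) {t u : ℕ} (htu : t ≤ u) (v : ℕ) :
    cnt F u v ≤ cnt F t v := by
  apply Finset.card_le_card
  intro b hb
  simp only [Finset.mem_filter, Finset.mem_univ, true_and] at hb ⊢
  exact le_trans (hFmono b t u htu) hb

lemma ordStat_mono_t (hFmono : ∀ b t u, t ≤ u → F b t ≤ F b u)
    (hFub : ∀ b t, F b t ≤ n) {a : ℕ} (hai : a ≤ i) {t u : ℕ} (htu : t ≤ u) :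
    ordStat F a t ≤ ordStat F a u :=
  Nat.sInf_le (by
    simp only [Set.mem_setOf_eq]
    exact le_trans (ordStat_mem F hFub hai u) (cnt_anti F hFmono htu _))

lemma ordStat_mono_a (hFub : ∀ b t, F b t ≤ n) {a b : ℕ} (hab : a ≤ b) (hbi : b ≤ i) (t : ℕ) :
    ordStat F a t ≤ ordStat F b t :=
  Nat.sInf_le (by
    simp only [Set.mem_setOf_eq]
    exact le_trans hab (ordStat_mem F hFub hbi t))

lemma ordStat_cover (hFmono : ∀ b t u, t ≤ u → F b t ≤ F b u)
    (hFub : ∀ b t, F b t ≤ n) (b : Fin i) (t j : ℕ)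
    (h1 : F b (t-1) ≤ j) (h2 : j ≤ F b t) :
    ∃ a, 1 ≤ a ∧ a ≤ i ∧ ordStat F a (t-1) ≤ j ∧ j ≤ ordStat F a t := by
  refine ⟨cnt F (t-1) j, ?_, cnt_le F _ _, ?_, ?_⟩
  · apply Finset.card_pos.mpr
    exact ⟨b, Finset.mem_filter.mpr ⟨Finset.mem_univ b, h1⟩⟩
  · exact Nat.sInf_le (by simp only [Set.mem_setOf_eq]; exact le_rfl)
  · apply le_csInf ⟨n, by
      simp only [Set.mem_setOf_eq, cnt_top F hFub]
      exact cnt_le F (t-1) j⟩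
    intro v hv
    simp only [Set.mem_setOf_eq] at hv
    by_contra hlt
    push_neg at hlt
    have hsub : (Finset.univ.filter fun c => F c t ≤ v) ⊆
        (Finset.univ.filter fun c => F c (t-1) ≤ j) := by
      intro c hc
      simp only [Finset.mem_filter, Finset.mem_univ, true_and] at hc ⊢
      exact le_trans (hFmono c (t-1) t (Nat.sub_le _ _)) (le_trans hc (by omega))
    have hbmem : b ∈ (Finset.univ.filter fun c => F c (t-1) ≤ j) :=
      Finset.mem_filter.mpr ⟨Finset.mem_univ b, h1⟩
    have hbnot : b ∉ (Finset.univ.filter fun c => F c t ≤ v) := by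
      simp only [Finset.mem_filter, Finset.mem_univ, true_and]
      omega
    have hss := Finset.card_lt_card ((Finset.ssubset_iff_of_subset hsub).mpr ⟨b, hbmem, hbnot⟩)
    have hv2 : cnt F t v < cnt F (t-1) j := hss
    omega

end OrdStat

end Stmt9Helper

/-- Given increasing polyominoes `I₁,…,I_i ⊆ R_{m×n}`, there are non-overlapping
increasing polyominoes `I'₁,…,I'_{i'}` (with `i' ≤ i`), fully defined on
`{0,…,m}`, whose union contains the union of the original ones. -/
theorem stmt9 (m n i : ℕ) (hm : 1 ≤ m) (hn : 1 ≤ n) (hi : 1 ≤ i)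
    (I : Fin i → MonoPoly m n) (hI : ∀ a, (I a).Increasing) :
    ∃ i' : ℕ, i' ≤ i ∧ ∃ Q : Fin i' → (ℕ → ℕ),
      (∀ a, IncFull m n (Q a)) ∧
      (∀ a b, a ≠ b → Disjoint (cellsFull m (Q a)) (cellsFull m (Q b))) ∧
      ((⋃ a, (I a).cells) ⊆ ⋃ a, cellsFull m (Q a)) := by
  classical
  by_cases hni : n ≤ i
  · -- use `n` horizontal rows
    refine ⟨n, hni, fun a _ => (a : ℕ) + 1, ?_, ?_, ?_⟩
    · intro a
      exact ⟨fun t _ => ⟨Nat.succ_le_succ (Nat.zero_le _), a.isLt⟩, fun t u _ _ => le_rfl⟩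
    · intro a b hab
      rw [Set.disjoint_left]
      rintro ⟨t, j⟩ h1 h2
      simp only [cellsFull, Set.mem_setOf_eq] at h1 h2
      exact hab (Fin.ext (by omega))
    · rintro ⟨t, j⟩ hx
      simp only [Set.mem_iUnion, MonoPoly.cells, Set.mem_setOf_eq] at hx
      obtain ⟨c, h1, h2, h3, h4⟩ := hx
      have hr1 : (I c).r - 1 ≤ t - 1 := Nat.sub_le_sub_right h1 1
      have hts : t - 1 ≤ (I c).s := le_trans (Nat.sub_le _ _) h2
      have hb1 := (I c).val_mem (t-1) hr1 hts
      have hb2 := (I c).val_mem t (le_trans (Nat.sub_le _ _) h1) h2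
      have hj1 : 1 ≤ j := le_trans (le_min hb1.1 hb2.1) h3
      have hjn : j ≤ n := le_trans h4 (max_le hb1.2 hb2.2)
      refine Set.mem_iUnion.mpr ⟨⟨j - 1, by omega⟩, ?_⟩
      simp only [cellsFull, Set.mem_setOf_eq]
      exact ⟨le_trans (I c).one_le_r h1, le_trans h2 (I c).s_le_m, by omega, by omega⟩
  · push_neg at hni   -- i < n
    set F : Fin i → ℕ → ℕ := fun b => Stmt9Helper.clampF (I b) with hF
    have hFmono : ∀ (b : Fin i) (t u : ℕ), t ≤ u → F b t ≤ F b u :=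
      fun b t u h => Stmt9Helper.clampF_mono (I b) (hI b) h
    have hFlb : ∀ (b : Fin i) (t : ℕ), 1 ≤ F b t :=
      fun b t => (Stmt9Helper.clampF_bounds (I b) t).1
    have hFub : ∀ (b : Fin i) (t : ℕ), F b t ≤ n :=
      fun b t => (Stmt9Helper.clampF_bounds (I b) t).2
    set G : ℕ → ℕ → ℕ := fun a t => Stmt9Helper.ordStat F a t with hG
    set Gq : ℕ → ℕ → ℕ := fun a t => min (G (min a i) t) (n - i + a) with hGq
    set H : ℕ → ℕ → ℕ := Stmt9Helper.auxH m Gq with hH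
    have hGqmono : ∀ a t u, t ≤ u → Gq a t ≤ Gq a u := by
      intro a t u htu
      simp only [hGq]
      exact min_le_min
        (Stmt9Helper.ordStat_mono_t F hFmono hFub (min_le_right a i) htu) le_rfl
    have hGqceil : ∀ a t, Gq a t ≤ (n - i) + a := fun a t => min_le_right _ _
    have hGqA : ∀ a b t, a ≤ b → Gq a t ≤ Gq b t := by
      intro a b t hab
      simp only [hGq]
      exact min_le_min
        (Stmt9Helper.ordStat_mono_a F hFub (min_le_min hab le_rfl) (min_le_right b i) t)
        (by omega)
    have hHmono : ∀ a t u, t ≤ u → H a t ≤ H a u := by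
      intro a t u htu
      simp only [hH]
      exact Stmt9Helper.auxH_mono hGqmono a t u htu
    have hHceil : ∀ a t, H a t ≤ (n - i) + a := by
      intro a t
      simp only [hH]
      exact Stmt9Helper.auxH_ceil hGqceil a t
    have hHpos : ∀ a t, 1 ≤ H (a+1) t := by
      intro a t
      simp only [hH]
      exact Stmt9Helper.auxH_pos a t
    have hGqleH : ∀ a t, 1 ≤ a → Gq a t ≤ H a t := by
      intro a t ha
      rcases a with _ | a'
      · omega
      · simp only [hH]
        rw [Stmt9Helper.auxH_succ]
        exact le_max_left _ _
    have hHsep : ∀ a b t, a + 1 ≤ b → 1 ≤ t → t ≤ m → H a t + 1 ≤ H b (t-1) := by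
      intro a b t hab ht htm
      simp only [hH]
      exact Stmt9Helper.auxH_sep hGqmono a b t hab ht htm
    -- the key covering claim for the stack
    have hCov : ∀ a, a ≤ i → ∀ t j, 1 ≤ t → t ≤ m → 1 ≤ j → Gq a (t-1) ≤ j → j ≤ H a t →
        ∃ b, 1 ≤ b ∧ b ≤ a ∧ H b (t-1) ≤ j ∧ j ≤ H b t := by
      intro a
      induction a with
      | zero =>
        intro _ t j _ _ hj _ h2
        exfalso
        have hz : H 0 t = 0 := by simp only [hH]; rfl
        omega
      | succ a ih =>
        intro hai t j ht htm hj h1 h2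
        rcases le_or_gt (H (a+1) (t-1)) j with hcase | hcase
        · exact ⟨a+1, Nat.succ_le_succ (Nat.zero_le _), le_rfl, hcase, h2⟩
        · have hmin : min (t-1+1) m = t := by omega
          rw [hH, Stmt9Helper.auxH_succ, hmin] at hcase
          rcases lt_max_iff.mp hcase with hx | hx
          · omega
          · have hx' : j ≤ H a t := by
              simp only [hH]
              omega
            obtain ⟨b, hb1, hba, hc1, hc2⟩ := ih (by omega) t j ht htm hj
              (le_trans (hGqA a (a+1) (t-1) (Nat.le_succ a)) h1) hx'
            exact ⟨b, hb1, le_trans hba (Nat.le_succ a), hc1, hc2⟩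
    refine ⟨i, le_rfl, fun a => H ((a : ℕ) + 1), ?_, ?_, ?_⟩
    · intro a
      constructor
      · intro t _
        refine ⟨hHpos _ _, ?_⟩
        show H ((a : ℕ) + 1) t ≤ n
        have h1 := hHceil ((a : ℕ) + 1) t
        have h2 : (a : ℕ) + 1 ≤ i := a.isLt
        omega
      · intro t u htu _
        exact hHmono _ _ _ htu
    · intro a b hab
      have key : ∀ p q : Fin i, (p : ℕ) < (q : ℕ) →
          Disjoint (cellsFull m (H ((p : ℕ) + 1))) (cellsFull m (H ((q : ℕ) + 1))) := by
        intro p q hpq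
        rw [Set.disjoint_left]
        rintro ⟨t, j⟩ h1 h2
        simp only [cellsFull, Set.mem_setOf_eq] at h1 h2
        obtain ⟨ht1, htm, ha1, ha2⟩ := h1
        obtain ⟨_, _, hb1, hb2⟩ := h2
        have := hHsep ((p : ℕ) + 1) ((q : ℕ) + 1) t (by omega) ht1 htm
        omega
      rcases Ne.lt_or_gt hab with h | h
      · exact key a b h
      · exact (key b a h).symm
    · rintro ⟨t, j⟩ hx
      simp only [Set.mem_iUnion, MonoPoly.cells, Set.mem_setOf_eq] at hx
      obtain ⟨c, h1, h2, h3, h4⟩ := hx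
      have hr1 : (I c).r - 1 ≤ t - 1 := Nat.sub_le_sub_right h1 1
      have hPle : (I c).P (t-1) ≤ (I c).P t := hI c (t-1) t hr1 (Nat.sub_le _ _) h2
      rw [min_eq_left hPle] at h3
      rw [max_eq_right hPle] at h4
      have hFt1 : F c (t-1) = (I c).P (t-1) := by
        simp only [hF]
        exact Stmt9Helper.clampF_eq (I c) hr1 (le_trans (Nat.sub_le _ _) h2)
      have hFt : F c t = (I c).P t := by
        simp only [hF]
        exact Stmt9Helper.clampF_eq (I c) (le_trans (Nat.sub_le _ _) h1) h2
      have hc3 : F c (t-1) ≤ j := by rw [hFt1]; exact h3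
      have hc4 : j ≤ F c t := by rw [hFt]; exact h4
      have ht1 : 1 ≤ t := le_trans (I c).one_le_r h1
      have htm : t ≤ m := le_trans h2 (I c).s_le_m
      have hj1 : 1 ≤ j := le_trans (hFlb c (t-1)) hc3
      have hjn : j ≤ n := le_trans hc4 (hFub c t)
      obtain ⟨a, ha1, hai, hg1, hg2⟩ :=
        Stmt9Helper.ordStat_cover F hFmono hFub c t j hc3 hc4
      have hmin_a : min a i = a := min_eq_left hai
      rcases le_or_gt j ((n - i) + a) with hcap | hcap
      · -- uncapped region: use the covering claim
        have h1' : Gq a (t-1) ≤ j := by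
          simp only [hGq, hmin_a]
          exact le_trans (min_le_left _ _) hg1
        have h2' : j ≤ H a t := by
          have hq : j ≤ Gq a t := by
            simp only [hGq, hmin_a]
            exact le_min hg2 hcap
          exact le_trans hq (hGqleH a t ha1)
        obtain ⟨b, hb1, hba, hcov1, hcov2⟩ := hCov a hai t j ht1 htm hj1 h1' h2'
        refine Set.mem_iUnion.mpr ⟨⟨b - 1, by omega⟩, ?_⟩
        simp only [cellsFull, Set.mem_setOf_eq]
        have hbb : b - 1 + 1 = b := by omega
        refine ⟨ht1, htm, ?_, ?_⟩
        · show H (b - 1 + 1) (t - 1) ≤ j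
          rw [hbb]; exact hcov1
        · show j ≤ H (b - 1 + 1) t
          rw [hbb]; exact hcov2
      · -- capped region: the ribbon at level `i + j - n` catches the cell
        have hab1 : a + 1 ≤ i + j - n := by omega
        have hbi : i + j - n ≤ i := by omega
        have hb1 : 1 ≤ i + j - n := by omega
        have hceil2 : H (i + j - n) (t-1) ≤ j :=
          le_trans (hHceil (i + j - n) (t-1)) (by omega)
        have hup : j ≤ H (i + j - n) t := by
          have hGa : G a t ≤ G (i + j - n) t := by
            simp only [hG]
            exact Stmt9Helper.ordStat_mono_a F hFub (by omega) hbi t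
          have hq : j ≤ Gq (i + j - n) t := by
            simp only [hGq, min_eq_left hbi]
            exact le_min (le_trans hg2 hGa) (by omega)
          exact le_trans hq (hGqleH (i + j - n) t hb1)
        refine Set.mem_iUnion.mpr ⟨⟨i + j - n - 1, by omega⟩, ?_⟩
        simp only [cellsFull, Set.mem_setOf_eq]
        have hbb : i + j - n - 1 + 1 = i + j - n := by omega
        refine ⟨ht1, htm, ?_, ?_⟩
        · show H (i + j - n - 1 + 1) (t - 1) ≤ j
          rw [hbb]; exact hceil2
        · show j ≤ H (i + j - n - 1 + 1) t
          rw [hbb]; exact hup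
end

section
/- Let n, i, d be natural numbers with i + d < n. If the lattice rectangle R_{m×n} admits an (i,d)-covering, then m·(n − (i+d)) ≤ (i+d)·(n−1); in particular the set of all m for which R_{m×n} admits an (i,d)-covering is bounded. -/
instance {m n : ℕ} (Q : MonoPoly m n) : DecidablePred (· ∈ Q.cells) := fun c =>
  decidable_of_iff (Q.r ≤ c.1 ∧ c.1 ≤ Q.s ∧
       min (Q.P (c.1 - 1)) (Q.P c.1) ≤ c.2 ∧
       c.2 ≤ max (Q.P (c.1 - 1)) (Q.P c.1)) Iff.rfl

lemma card_cells_le (m n : ℕ) (Q : MonoPoly m n) :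
    ((Finset.Icc 1 m ×ˢ Finset.Icc 1 n).filter (fun c => c ∈ Q.cells)).card
      ≤ m + n - 1 := by
  rcases Q.mono with hmono | hmono
  · have hinj : ∀ c ∈ (Finset.Icc 1 m ×ˢ Finset.Icc 1 n).filter (fun c => c ∈ Q.cells),
        ((c.1 : ℤ) + c.2) ∈ Finset.Icc (2 : ℤ) (m + n) := by
      rintro ⟨k, j⟩ hc
      simp only [Finset.mem_filter, Finset.mem_product, Finset.mem_Icc,
        MonoPoly.cells, Set.mem_setOf_eq] at hc ⊢
      omega
    have := Finset.card_le_card_of_injOn (fun c : ℕ × ℕ => (c.1 : ℤ) + c.2) hinj ?_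
    · refine this.trans ?_
      rw [Int.card_Icc]
      omega
    · rintro ⟨k, j⟩ hk ⟨k', j'⟩ hk' heq
      simp only [Finset.mem_coe, Finset.mem_filter, Finset.mem_product, Finset.mem_Icc,
        MonoPoly.cells, Set.mem_setOf_eq] at hk hk' heq
      obtain ⟨⟨-, -⟩, hr, hs, hmin, hmax⟩ := hk
      obtain ⟨⟨-, -⟩, hr', hs', hmin', hmax'⟩ := hk'
      have hr1 := Q.one_le_r
      rcases lt_trichotomy k k' with hlt | heqk | hlt
      · exfalso
        have h1 : Q.P k ≤ Q.P (k' - 1) := hmono k (k' - 1) (by omega) (by omega) (by omega)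
        have h2 : Q.P (k - 1) ≤ Q.P (k' - 1) :=
          hmono (k - 1) (k' - 1) (by omega) (by omega) (by omega)
        have h3 : Q.P (k' - 1) ≤ Q.P k' := hmono (k' - 1) k' (by omega) (by omega) (by omega)
        have h4 : j ≤ Q.P (k' - 1) := hmax.trans (max_le h2 h1)
        have h5 : Q.P (k' - 1) ≤ j' := (le_min le_rfl h3).trans hmin'
        omega
      · have : j = j' := by omega
        simp [heqk, this]
      · exfalso
        have h1 : Q.P k' ≤ Q.P (k - 1) := hmono k' (k - 1) (by omega) (by omega) (by omega)
        have h2 : Q.P (k' - 1) ≤ Q.P (k - 1) :=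
          hmono (k' - 1) (k - 1) (by omega) (by omega) (by omega)
        have h3 : Q.P (k - 1) ≤ Q.P k := hmono (k - 1) k (by omega) (by omega) (by omega)
        have h4 : j' ≤ Q.P (k - 1) := hmax'.trans (max_le h2 h1)
        have h5 : Q.P (k - 1) ≤ j := (le_min le_rfl h3).trans hmin
        omega
  · have hinj : ∀ c ∈ (Finset.Icc 1 m ×ˢ Finset.Icc 1 n).filter (fun c => c ∈ Q.cells),
        ((c.1 : ℤ) - c.2) ∈ Finset.Icc (1 - (n : ℤ)) ((m : ℤ) - 1) := by
      rintro ⟨k, j⟩ hc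
      simp only [Finset.mem_filter, Finset.mem_product, Finset.mem_Icc,
        MonoPoly.cells, Set.mem_setOf_eq] at hc ⊢
      omega
    have := Finset.card_le_card_of_injOn (fun c : ℕ × ℕ => (c.1 : ℤ) - c.2) hinj ?_
    · refine this.trans ?_
      rw [Int.card_Icc]
      omega
    · rintro ⟨k, j⟩ hk ⟨k', j'⟩ hk' heq
      simp only [Finset.mem_coe, Finset.mem_filter, Finset.mem_product, Finset.mem_Icc,
        MonoPoly.cells, Set.mem_setOf_eq] at hk hk' heq
      obtain ⟨⟨-, -⟩, hr, hs, hmin, hmax⟩ := hk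
      obtain ⟨⟨-, -⟩, hr', hs', hmin', hmax'⟩ := hk'
      have hr1 := Q.one_le_r
      rcases lt_trichotomy k k' with hlt | heqk | hlt
      · exfalso
        have h1 : Q.P (k' - 1) ≤ Q.P k := hmono k (k' - 1) (by omega) (by omega) (by omega)
        have h2 : Q.P (k' - 1) ≤ Q.P (k - 1) :=
          hmono (k - 1) (k' - 1) (by omega) (by omega) (by omega)
        have h3 : Q.P k' ≤ Q.P (k' - 1) := hmono (k' - 1) k' (by omega) (by omega) (by omega)
        have h4 : Q.P (k' - 1) ≤ j := (le_min h2 h1).trans hmin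
        have h5 : j' ≤ Q.P (k' - 1) := hmax'.trans (max_le le_rfl h3)
        omega
      · have : j = j' := by omega
        simp [heqk, this]
      · exfalso
        have h1 : Q.P (k - 1) ≤ Q.P k' := hmono k' (k - 1) (by omega) (by omega) (by omega)
        have h2 : Q.P (k - 1) ≤ Q.P (k' - 1) :=
          hmono (k' - 1) (k - 1) (by omega) (by omega) (by omega)
        have h3 : Q.P k ≤ Q.P (k - 1) := hmono (k - 1) k (by omega) (by omega) (by omega)
        have h4 : Q.P (k - 1) ≤ j' := (le_min h2 h1).trans hmin'
        have h5 : j ≤ Q.P (k - 1) := hmax.trans (max_le le_rfl h3)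
        omega

lemma main_bound (n i d m : ℕ) (h : i + d < n)
    (hcov : ∃ (F : Fin i → MonoPoly m n) (G : Fin d → MonoPoly m n),
        IsIDCovering m n i d F G) :
    m * (n - (i + d)) ≤ (i + d) * (n - 1) := by
  obtain ⟨F, G, hFinc, hGdec, hc⟩ := hcov
  set grid := Finset.Icc 1 m ×ˢ Finset.Icc 1 n with hgrid
  have hsub : grid ⊆
      (Finset.univ.biUnion fun a => grid.filter (fun c => c ∈ (F a).cells)) ∪
      (Finset.univ.biUnion fun b => grid.filter (fun c => c ∈ (G b).cells)) := by
    rintro ⟨k, j⟩ hkj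
    have hb : 1 ≤ k ∧ k ≤ m ∧ 1 ≤ j ∧ j ≤ n := by
      simpa [hgrid, Finset.mem_product, Finset.mem_Icc, and_assoc] using hkj
    rcases hc k j hb.1 hb.2.1 hb.2.2.1 hb.2.2.2 with ⟨a, ha⟩ | ⟨b, hbm⟩
    · exact Finset.mem_union_left _ (Finset.mem_biUnion.2
        ⟨a, Finset.mem_univ _, Finset.mem_filter.2 ⟨hkj, ha⟩⟩)
    · exact Finset.mem_union_right _ (Finset.mem_biUnion.2
        ⟨b, Finset.mem_univ _, Finset.mem_filter.2 ⟨hkj, hbm⟩⟩)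
  have hcard : m * n ≤ (i + d) * (m + n - 1) := by
    calc m * n = grid.card := by
          simp [hgrid, Nat.card_Icc]
      _ ≤ _ := Finset.card_le_card hsub
      _ ≤ (Finset.univ.biUnion fun a => grid.filter (fun c => c ∈ (F a).cells)).card +
          (Finset.univ.biUnion fun b => grid.filter (fun c => c ∈ (G b).cells)).card :=
          Finset.card_union_le _ _
      _ ≤ (∑ a : Fin i, (grid.filter (fun c => c ∈ (F a).cells)).card) +
          (∑ b : Fin d, (grid.filter (fun c => c ∈ (G b).cells)).card) :=
          Nat.add_le_add (Finset.card_biUnion_le) (Finset.card_biUnion_le)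
      _ ≤ (∑ _a : Fin i, (m + n - 1)) + (∑ _b : Fin d, (m + n - 1)) :=
          Nat.add_le_add
            (Finset.sum_le_sum fun a _ => card_cells_le m n (F a))
            (Finset.sum_le_sum fun b _ => card_cells_le m n (G b))
      _ = (i + d) * (m + n - 1) := by
          simp [Finset.sum_const, Nat.add_mul]
  have e1 : m * n = m * (i + d) + m * (n - (i + d)) := by
    rw [← Nat.mul_add]
    congr 1
    omega
  have e2 : (i + d) * (m + n - 1) = m * (i + d) + (i + d) * (n - 1) := by
    have : m + n - 1 = m + (n - 1) := by omega
    rw [this, Nat.mul_add, Nat.mul_comm (i + d) m]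
  rw [e1, e2] at hcard
  exact Nat.le_of_add_le_add_left hcard

/-- If `i + d < n` and `R_{m×n}` admits an `(i,d)`-covering, then
`m (n - (i+d)) ≤ (i+d)(n-1)`; in particular the set of all such `m` is
bounded. -/
theorem stmt10 (n i d m : ℕ) (h : i + d < n)
    (hcov : ∃ (F : Fin i → MonoPoly m n) (G : Fin d → MonoPoly m n),
        IsIDCovering m n i d F G) :
    m * (n - (i + d)) ≤ (i + d) * (n - 1) ∧
    BddAbove {m' : ℕ | ∃ (F : Fin i → MonoPoly m' n) (G : Fin d → MonoPoly m' n),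
        IsIDCovering m' n i d F G} := by
  refine ⟨main_bound n i d m h hcov, ⟨(i + d) * (n - 1), ?_⟩⟩
  rintro m' hm'
  have hb := main_bound n i d m' h hm'
  have h1 : m' ≤ m' * (n - (i + d)) := Nat.le_mul_of_pos_right m' (by omega)
  exact h1.trans hb
end

section
/- Let n, i, d be natural numbers with i + d < n, and let m be the largest natural number such that R_{m×n} admits an (i,d)-covering. If some (i,d)-covering of R_{m×n} contains an increasing polyomino I and a decreasing polyomino D that are both fully defined on {0,…,m}, then I(0) < D(0) and I(m) > D(m). -/
namespace Stmt11Aux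

/-- relax the width bound -/
def relax {m n : ℕ} (Q : MonoPoly m n) : MonoPoly (m+1) n where
  r := Q.r
  s := Q.s
  P := Q.P
  one_le_r := Q.one_le_r
  r_le_s := Q.r_le_s
  s_le_m := Q.s_le_m.trans (Nat.le_succ m)
  val_mem := Q.val_mem
  mono := Q.mono

@[simp] lemma relax_cells {m n : ℕ} (Q : MonoPoly m n) : (relax Q).cells = Q.cells := rfl

lemma relax_inc {m n : ℕ} {Q : MonoPoly m n} (h : Q.Increasing) : (relax Q).Increasing := h
lemma relax_dec {m n : ℕ} {Q : MonoPoly m n} (h : Q.Decreasing) : (relax Q).Decreasing := h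

/-- shift one column to the right -/
def shift {m n : ℕ} (Q : MonoPoly m n) : MonoPoly (m+1) n where
  r := Q.r + 1
  s := Q.s + 1
  P := fun t => Q.P (t - 1)
  one_le_r := by omega
  r_le_s := by have := Q.r_le_s; omega
  s_le_m := by have := Q.s_le_m; omega
  val_mem := by
    intro t h1 h2
    have := Q.one_le_r
    exact Q.val_mem (t-1) (by omega) (by omega)
  mono := by
    have := Q.one_le_r
    rcases Q.mono with hq | hq
    · exact Or.inl fun t u h1 h2 h3 => hq _ _ (by omega) (by omega) (by omega)
    · exact Or.inr fun t u h1 h2 h3 => hq _ _ (by omega) (by omega) (by omega)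

lemma shift_inc {m n : ℕ} {Q : MonoPoly m n} (h : Q.Increasing) : (shift Q).Increasing := by
  intro t u h1 h2 h3
  have := Q.one_le_r
  exact h _ _ (by simp [shift] at h1 ⊢; omega) (by omega) (by simp [shift] at h3 ⊢; omega)

lemma shift_dec {m n : ℕ} {Q : MonoPoly m n} (h : Q.Decreasing) : (shift Q).Decreasing := by
  intro t u h1 h2 h3
  have := Q.one_le_r
  exact h _ _ (by simp [shift] at h1 ⊢; omega) (by omega) (by simp [shift] at h3 ⊢; omega)

lemma mem_shift {m n : ℕ} {Q : MonoPoly m n} {k l : ℕ} (h : (k, l) ∈ Q.cells) :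
    (k + 1, l) ∈ (shift Q).cells := by
  obtain ⟨h1, h2, h3, h4⟩ := h
  exact ⟨by simp [shift]; omega, by simp [shift]; omega,
    by simpa [shift, MonoPoly.cells] using h3, by simpa [shift, MonoPoly.cells] using h4⟩

end Stmt11Aux

namespace Stmt11Aux

/-- full increasing tile extended by a new leftmost column, covering heights 1..f 0 there -/
def leftInc (m n : ℕ) (f : ℕ → ℕ) (hn : 1 ≤ n)
    (hval : ∀ t, t ≤ m → 1 ≤ f t ∧ f t ≤ n)
    (hmono : ∀ t u, t ≤ u → u ≤ m → f t ≤ f u) : MonoPoly (m+1) n where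
  r := 1
  s := m+1
  P := fun t => if t = 0 then 1 else f (t-1)
  one_le_r := le_refl 1
  r_le_s := by omega
  s_le_m := le_refl _
  val_mem := by
    intro t _ h2
    by_cases ht : t = 0
    · simp [ht, hn]
    · simp only [ht, if_false]; exact hval (t-1) (by omega)
  mono := Or.inl (by
    intro t u _ h2 h3
    by_cases ht : t = 0
    · by_cases hu : u = 0
      · simp [ht, hu]
      · simp only [ht, hu, if_true, if_false]; exact (hval (u-1) (by omega)).1
    · have hu : ¬ u = 0 := by omega
      simp only [ht, hu, if_false]
      exact hmono (t-1) (u-1) (by omega) (by omega))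

@[simp] lemma leftInc_r {m n f hn hval hmono} : (leftInc m n f hn hval hmono).r = 1 := rfl
@[simp] lemma leftInc_s {m n f hn hval hmono} : (leftInc m n f hn hval hmono).s = m+1 := rfl
@[simp] lemma leftInc_P {m n f hn hval hmono} (t : ℕ) :
    (leftInc m n f hn hval hmono).P t = if t = 0 then 1 else f (t-1) := rfl

lemma leftInc_inc {m n f hn hval hmono} : (leftInc m n f hn hval hmono).Increasing := by
  intro t u _ h2 h3
  simp only [leftInc_P, leftInc_s] at *
  by_cases ht : t = 0
  · by_cases hu : u = 0
    · simp [ht, hu]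
    · simp only [ht, hu, if_true, if_false]; exact (hval (u-1) (by omega)).1
  · have hu : ¬ u = 0 := by omega
    simp only [ht, hu, if_false]
    exact hmono (t-1) (u-1) (by omega) (by omega)

def leftDec (m n : ℕ) (g : ℕ → ℕ) (hn : 1 ≤ n)
    (hval : ∀ t, t ≤ m → 1 ≤ g t ∧ g t ≤ n)
    (hmono : ∀ t u, t ≤ u → u ≤ m → g u ≤ g t) : MonoPoly (m+1) n where
  r := 1
  s := m+1
  P := fun t => if t = 0 then n else g (t-1)
  one_le_r := le_refl 1
  r_le_s := by omega
  s_le_m := le_refl _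
  val_mem := by
    intro t _ h2
    by_cases ht : t = 0
    · simp [ht, hn]
    · simp only [ht, if_false]; exact hval (t-1) (by omega)
  mono := Or.inr (by
    intro t u _ h2 h3
    by_cases ht : t = 0
    · by_cases hu : u = 0
      · simp [ht, hu]
      · simp only [ht, hu, if_true, if_false]; exact (hval (u-1) (by omega)).2
    · have hu : ¬ u = 0 := by omega
      simp only [ht, hu, if_false]
      exact hmono (t-1) (u-1) (by omega) (by omega))

@[simp] lemma leftDec_r {m n g hn hval hmono} : (leftDec m n g hn hval hmono).r = 1 := rfl
@[simp] lemma leftDec_s {m n g hn hval hmono} : (leftDec m n g hn hval hmono).s = m+1 := rfl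
@[simp] lemma leftDec_P {m n g hn hval hmono} (t : ℕ) :
    (leftDec m n g hn hval hmono).P t = if t = 0 then n else g (t-1) := rfl

def rightInc (m n : ℕ) (f : ℕ → ℕ) (hn : 1 ≤ n)
    (hval : ∀ t, t ≤ m → 1 ≤ f t ∧ f t ≤ n)
    (hmono : ∀ t u, t ≤ u → u ≤ m → f t ≤ f u) : MonoPoly (m+1) n where
  r := 1
  s := m+1
  P := fun t => if t ≤ m then f t else n
  one_le_r := le_refl 1
  r_le_s := by omega
  s_le_m := le_refl _
  val_mem := by
    intro t _ h2
    by_cases ht : t ≤ m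
    · simp only [ht, if_true]; exact hval t ht
    · simp [ht, hn]
  mono := Or.inl (by
    intro t u _ h2 h3
    by_cases hu : u ≤ m
    · simp only [hu, show t ≤ m by omega, if_true]; exact hmono t u ‹_› hu
    · by_cases ht : t ≤ m
      · simp only [ht, hu, if_true, if_false]; exact (hval t ht).2
      · simp [ht, hu])

@[simp] lemma rightInc_r {m n f hn hval hmono} : (rightInc m n f hn hval hmono).r = 1 := rfl
@[simp] lemma rightInc_s {m n f hn hval hmono} : (rightInc m n f hn hval hmono).s = m+1 := rfl
@[simp] lemma rightInc_P {m n f hn hval hmono} (t : ℕ) :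
    (rightInc m n f hn hval hmono).P t = if t ≤ m then f t else n := rfl

def rightDec (m n : ℕ) (g : ℕ → ℕ) (hn : 1 ≤ n)
    (hval : ∀ t, t ≤ m → 1 ≤ g t ∧ g t ≤ n)
    (hmono : ∀ t u, t ≤ u → u ≤ m → g u ≤ g t) : MonoPoly (m+1) n where
  r := 1
  s := m+1
  P := fun t => if t ≤ m then g t else 1
  one_le_r := le_refl 1
  r_le_s := by omega
  s_le_m := le_refl _
  val_mem := by
    intro t _ h2
    by_cases ht : t ≤ m
    · simp only [ht, if_true]; exact hval t ht
    · simp [ht, hn]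
  mono := Or.inr (by
    intro t u _ h2 h3
    by_cases hu : u ≤ m
    · simp only [hu, show t ≤ m by omega, if_true]; exact hmono t u ‹_› hu
    · by_cases ht : t ≤ m
      · simp only [ht, hu, if_true, if_false]; exact (hval t ht).1
      · simp [ht, hu])

@[simp] lemma rightDec_r {m n g hn hval hmono} : (rightDec m n g hn hval hmono).r = 1 := rfl
@[simp] lemma rightDec_s {m n g hn hval hmono} : (rightDec m n g hn hval hmono).s = m+1 := rfl
@[simp] lemma rightDec_P {m n g hn hval hmono} (t : ℕ) :
    (rightDec m n g hn hval hmono).P t = if t ≤ m then g t else 1 := rfl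

lemma leftDec_dec {m n g hn hval hmono} : (leftDec m n g hn hval hmono).Decreasing := by
  intro t u _ h2 h3
  simp only [leftDec_P, leftDec_s] at *
  by_cases ht : t = 0
  · by_cases hu : u = 0
    · simp [ht, hu]
    · simp only [ht, hu, if_true, if_false]; exact (hval (u-1) (by omega)).2
  · have hu : ¬ u = 0 := by omega
    simp only [ht, hu, if_false]
    exact hmono (t-1) (u-1) (by omega) (by omega)

lemma rightInc_inc {m n f hn hval hmono} : (rightInc m n f hn hval hmono).Increasing := by
  intro t u _ h2 h3
  simp only [rightInc_P, rightInc_s] at *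
  by_cases hu : u ≤ m
  · simp only [hu, show t ≤ m by omega, if_true]; exact hmono t u ‹_› hu
  · by_cases ht : t ≤ m
    · simp only [ht, hu, if_true, if_false]; exact (hval t ht).2
    · simp [ht, hu]

lemma rightDec_dec {m n g hn hval hmono} : (rightDec m n g hn hval hmono).Decreasing := by
  intro t u _ h2 h3
  simp only [rightDec_P, rightDec_s] at *
  by_cases hu : u ≤ m
  · simp only [hu, show t ≤ m by omega, if_true]; exact hmono t u ‹_› hu
  · by_cases ht : t ≤ m
    · simp only [ht, hu, if_true, if_false]; exact (hval t ht).1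
    · simp [ht, hu]
end Stmt11Aux

section
open Stmt11Aux

/-- If `i + d < n`, `m` is the largest width admitting an `(i,d)`-covering of
`R_{m×n}`, and an `(i,d)`-covering of `R_{m×n}` contains an increasing tile `I`
and a decreasing tile `D`, both fully defined on `{0,…,m}`, then `I(0) < D(0)`
and `I(m) > D(m)`. -/
theorem stmt11 (n i d m : ℕ) (h : i + d < n)
    (hm : IsGreatest {m' : ℕ | ∃ (F : Fin i → MonoPoly m' n)
        (G : Fin d → MonoPoly m' n), IsIDCovering m' n i d F G} m)
    (F : Fin i → MonoPoly m n) (G : Fin d → MonoPoly m n)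
    (hcov : IsIDCovering m n i d F G)
    (a : Fin i) (b : Fin d) (ha : (F a).Full) (hb : (G b).Full) :
    (F a).P 0 < (G b).P 0 ∧ (G b).P m < (F a).P m := by
  obtain ⟨hmemS, hub⟩ := hm
  obtain ⟨hFinc, hGdec, hcov'⟩ := hcov
  obtain ⟨hra, hsa⟩ := ha
  obtain ⟨hrb, hsb⟩ := hb
  have hn : 1 ≤ n := by omega
  have hIval : ∀ t, t ≤ m → 1 ≤ (F a).P t ∧ (F a).P t ≤ n := fun t ht =>
    (F a).val_mem t (by rw [hra]; omega) (by rw [hsa]; exact ht)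
  have hImono : ∀ t u, t ≤ u → u ≤ m → (F a).P t ≤ (F a).P u := fun t u h1 h2 =>
    hFinc a t u (by rw [hra]; omega) h1 (by rw [hsa]; exact h2)
  have hDval : ∀ t, t ≤ m → 1 ≤ (G b).P t ∧ (G b).P t ≤ n := fun t ht =>
    (G b).val_mem t (by rw [hrb]; omega) (by rw [hsb]; exact ht)
  have hDmono : ∀ t u, t ≤ u → u ≤ m → (G b).P u ≤ (G b).P t := fun t u h1 h2 =>
    hGdec b t u (by rw [hrb]; omega) h1 (by rw [hsb]; exact h2)
  constructor
  · -- I(0) < D(0)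
    by_contra hc
    push_neg at hc
    have hS : m + 1 ∈ {m' : ℕ | ∃ (F : Fin i → MonoPoly m' n)
        (G : Fin d → MonoPoly m' n), IsIDCovering m' n i d F G} := by
      refine ⟨fun a' => if a' = a then leftInc m n (F a).P hn hIval hImono else shift (F a'),
        fun b' => if b' = b then leftDec m n (G b).P hn hDval hDmono else shift (G b'),
        ?_, ?_, ?_⟩
      · intro a'
        by_cases h' : a' = a
        · simp only [h', if_pos rfl]; exact @leftInc_inc m n _ hn hIval hImono
        · simp only [if_neg h']; exact shift_inc (hFinc a')
      · intro b'
        by_cases h' : b' = b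
        · simp only [h', if_pos rfl]; exact @leftDec_dec m n _ hn hDval hDmono
        · simp only [if_neg h']; exact shift_dec (hGdec b')
      · intro k l hk1 hkm hl1 hln
        have hf0 := hIval 0 (by omega)
        have hg0 := hDval 0 (by omega)
        by_cases hk : k = 1
        · subst hk
          by_cases hl : l ≤ (F a).P 0
          · refine Or.inl ⟨a, ?_⟩
            simp only [eq_self_iff_true, if_true, MonoPoly.cells, Set.mem_setOf_eq, leftInc_r, leftInc_s,
              leftInc_P]
            norm_num
            omega
          · refine Or.inr ⟨b, ?_⟩
            simp only [eq_self_iff_true, if_true, MonoPoly.cells, Set.mem_setOf_eq, leftDec_r, leftDec_s,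
              leftDec_P]
            norm_num
            omega
        · obtain ⟨a', hc'⟩ | ⟨b', hc'⟩ := hcov' (k-1) l (by omega) (by omega) hl1 hln
          · refine Or.inl ⟨a', ?_⟩
            by_cases h' : a' = a
            · subst h'
              obtain ⟨h1, h2, h3, h4⟩ := hc'
              rw [hra] at h1
              rw [hsa] at h2
              simp only [eq_self_iff_true, if_true, MonoPoly.cells, Set.mem_setOf_eq, leftInc_r, leftInc_s,
                leftInc_P, if_neg (show ¬ (k : ℕ) = 0 by omega),
                if_neg (show ¬ k - 1 = 0 by omega)]
              exact ⟨by omega, by omega, h3, h4⟩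
            · simp only [if_neg h']
              have h2 := mem_shift hc'
              rwa [Nat.sub_add_cancel (by omega : 1 ≤ k)] at h2
          · refine Or.inr ⟨b', ?_⟩
            by_cases h' : b' = b
            · subst h'
              obtain ⟨h1, h2, h3, h4⟩ := hc'
              rw [hrb] at h1
              rw [hsb] at h2
              simp only [eq_self_iff_true, if_true, MonoPoly.cells, Set.mem_setOf_eq, leftDec_r, leftDec_s,
                leftDec_P, if_neg (show ¬ (k : ℕ) = 0 by omega),
                if_neg (show ¬ k - 1 = 0 by omega)]
              exact ⟨by omega, by omega, h3, h4⟩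
            · simp only [if_neg h']
              have h2 := mem_shift hc'
              rwa [Nat.sub_add_cancel (by omega : 1 ≤ k)] at h2
    have := hub hS
    omega
  · -- D(m) < I(m)
    by_contra hc
    push_neg at hc
    have hS : m + 1 ∈ {m' : ℕ | ∃ (F : Fin i → MonoPoly m' n)
        (G : Fin d → MonoPoly m' n), IsIDCovering m' n i d F G} := by
      refine ⟨fun a' => if a' = a then rightInc m n (F a).P hn hIval hImono else relax (F a'),
        fun b' => if b' = b then rightDec m n (G b).P hn hDval hDmono else relax (G b'),
        ?_, ?_, ?_⟩
      · intro a'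
        by_cases h' : a' = a
        · simp only [h', if_pos rfl]; exact @rightInc_inc m n _ hn hIval hImono
        · simp only [if_neg h']; exact relax_inc (hFinc a')
      · intro b'
        by_cases h' : b' = b
        · simp only [h', if_pos rfl]; exact @rightDec_dec m n _ hn hDval hDmono
        · simp only [if_neg h']; exact relax_dec (hGdec b')
      · intro k l hk1 hkm hl1 hln
        have hfm := hIval m le_rfl
        have hgm := hDval m le_rfl
        by_cases hk : k ≤ m
        · obtain ⟨a', hc'⟩ | ⟨b', hc'⟩ := hcov' k l hk1 hk hl1 hln
          · refine Or.inl ⟨a', ?_⟩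
            by_cases h' : a' = a
            · subst h'
              obtain ⟨h1, h2, h3, h4⟩ := hc'
              rw [hra] at h1
              rw [hsa] at h2
              simp only [eq_self_iff_true, if_true, MonoPoly.cells, Set.mem_setOf_eq, rightInc_r, rightInc_s,
                rightInc_P, if_pos (show k - 1 ≤ m by omega), if_pos hk]
              exact ⟨by omega, by omega, h3, h4⟩
            · simp only [if_neg h', relax_cells]
              exact hc'
          · refine Or.inr ⟨b', ?_⟩
            by_cases h' : b' = b
            · subst h'
              obtain ⟨h1, h2, h3, h4⟩ := hc'
              rw [hrb] at h1
              rw [hsb] at h2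
              simp only [eq_self_iff_true, if_true, MonoPoly.cells, Set.mem_setOf_eq, rightDec_r, rightDec_s,
                rightDec_P, if_pos (show k - 1 ≤ m by omega), if_pos hk]
              exact ⟨by omega, by omega, h3, h4⟩
            · simp only [if_neg h', relax_cells]
              exact hc'
        · have hk' : k = m + 1 := by omega
          subst hk'
          by_cases hl : (F a).P m ≤ l
          · refine Or.inl ⟨a, ?_⟩
            simp only [eq_self_iff_true, if_true, MonoPoly.cells, Set.mem_setOf_eq, rightInc_r, rightInc_s,
              rightInc_P, Nat.add_sub_cancel, if_pos (le_refl m),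
              if_neg (show ¬ m + 1 ≤ m by omega)]
            exact ⟨by omega, le_refl _, by omega, by omega⟩
          · refine Or.inr ⟨b, ?_⟩
            simp only [eq_self_iff_true, if_true, MonoPoly.cells, Set.mem_setOf_eq, rightDec_r, rightDec_s,
              rightDec_P, Nat.add_sub_cancel, if_pos (le_refl m),
              if_neg (show ¬ m + 1 ≤ m by omega)]
            exact ⟨by omega, le_refl _, by omega, by omega⟩
    have := hub hS
    omega

end
end

section
/- Let m, n, i, d be natural numbers with m, n ≥ 1 and n ≥ i + d. If R_{m×n} admits an (i,d)-covering, then R_{m×n} admits an (i,d)-covering consisting of increasing polyominoes I_1, …, I_i and decreasing polyominoes D_1, …, D_d, all fully defined on {0,…,m}, such that I_j(0) = j for 1 ≤ j ≤ i and D_k(0) = n + 1 − k for 1 ≤ k ≤ d. -/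
namespace Stmt12Aux

variable {i m n : ℕ}

/-- number of members of the family whose value at time `t` is `≤ x`. -/
def cnt (f : Fin i → ℕ → ℕ) (x t : ℕ) : ℕ :=
  (Finset.univ.filter (fun a => f a t ≤ x)).card

/-- the `(j+1)`-st smallest value of the family at time `t`. -/
noncomputable def OS (f : Fin i → ℕ → ℕ) (j t : ℕ) : ℕ :=
  sInf {x | j + 1 ≤ cnt f x t}

lemma cnt_mono_x (f : Fin i → ℕ → ℕ) {x y : ℕ} (t : ℕ) (h : x ≤ y) :
    cnt f x t ≤ cnt f y t :=
  Finset.card_le_card (Finset.monotone_filter_right _ (fun _ _ ha => le_trans ha h))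

lemma core (hin : i ≤ n) (f : Fin i → ℕ → ℕ)
    (hf : ∀ a : Fin i, IncFull m n (f a)) :
    ∃ g : Fin i → ℕ → ℕ,
      (∀ a, IncFull m n (g a)) ∧ (∀ a, g a 0 = a.val + 1) ∧
      ∀ t x : ℕ, 1 ≤ t → t ≤ m → (∃ a, f a (t-1) ≤ x ∧ x ≤ f a t) →
        ∃ a, g a (t-1) ≤ x ∧ x ≤ g a t := by
  -- the set defining OS is nonempty (contains n)
  have setmem : ∀ j t, j < i → t ≤ m → n ∈ {x | j + 1 ≤ cnt f x t} := by
    intro j t hj ht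
    have : Finset.univ.filter (fun a => f a t ≤ n) = Finset.univ :=
      Finset.filter_true_of_mem (fun a _ => ((hf a).1 t ht).2)
    simp only [Set.mem_setOf_eq, cnt, this, Finset.card_univ, Fintype.card_fin]
    omega
  have OS_le_n : ∀ j t, j < i → t ≤ m → OS f j t ≤ n :=
    fun j t hj ht => Nat.sInf_le (setmem j t hj ht)
  have OS_mem : ∀ j t, j < i → t ≤ m → j + 1 ≤ cnt f (OS f j t) t :=
    fun j t hj ht => Nat.sInf_mem ⟨n, setmem j t hj ht⟩
  have cnt_anti_t : ∀ x t u, t ≤ u → u ≤ m → cnt f x u ≤ cnt f x t := by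
    intro x t u htu hum
    exact Finset.card_le_card (Finset.monotone_filter_right _
      (fun a _ ha => le_trans ((hf a).2 t u htu hum) ha))
  have OS_mono_t : ∀ j t u, j < i → t ≤ u → u ≤ m → OS f j t ≤ OS f j u := by
    intro j t u hj htu hum
    exact Nat.sInf_le (le_trans (OS_mem j u hj hum) (cnt_anti_t _ t u htu hum))
  have OS_mono_j : ∀ j' j t, j' ≤ j → j < i → t ≤ m → OS f j' t ≤ OS f j t := by
    intro j' j t hj' hj ht
    exact Nat.sInf_le (le_trans (by omega) (OS_mem j t hj ht))
  refine ⟨fun a t => if t = 0 then a.val + 1 else max (OS f a.val t) (a.val + 1),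
    ?_, fun a => rfl, ?_⟩
  · intro a
    constructor
    · intro t ht
      dsimp only
      by_cases h0 : t = 0
      · rw [if_pos h0]; omega
      · rw [if_neg h0]
        have h1 := OS_le_n a.val t a.isLt ht
        have h2 : a.val + 1 ≤ n := by have := a.isLt; omega
        constructor
        · omega
        · exact max_le h1 h2
    · intro t u htu hum
      dsimp only
      by_cases h0 : t = 0
      · subst h0
        by_cases hu : u = 0
        · simp [hu]
        · rw [if_pos rfl, if_neg hu]; exact le_max_right _ _
      · have hu : u ≠ 0 := by omega
        rw [if_neg h0, if_neg hu]
        exact max_le_max (OS_mono_t a.val t u a.isLt htu hum) le_rfl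
  · intro t x ht htm hex
    obtain ⟨a, ha1, ha2⟩ := hex
    have hx1 : 1 ≤ x := le_trans ((hf a).1 (t-1) (by omega)).1 ha1
    set j := cnt f (x - 1) t with hj_def
    have hsub : insert a (Finset.univ.filter (fun a' => f a' t ≤ x - 1)) ⊆
        Finset.univ.filter (fun a' => f a' (t-1) ≤ x) := by
      intro a' ha'
      rcases Finset.mem_insert.mp ha' with h | h
      · subst h; exact Finset.mem_filter.mpr ⟨Finset.mem_univ _, ha1⟩
      · have := (Finset.mem_filter.mp h).2
        have := (hf a').2 (t-1) t (by omega) htm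
        exact Finset.mem_filter.mpr ⟨Finset.mem_univ _, by omega⟩
    have hanotin : a ∉ Finset.univ.filter (fun a' => f a' t ≤ x - 1) := by
      intro hcon
      have := (Finset.mem_filter.mp hcon).2
      omega
    have hj1 : j + 1 ≤ cnt f x (t - 1) := by
      have := Finset.card_le_card hsub
      rwa [Finset.card_insert_of_notMem hanotin] at this
    have hji : j < i := by
      have : cnt f x (t-1) ≤ i := by
        have := Finset.card_filter_le (Finset.univ : Finset (Fin i))
          (fun a' => f a' (t-1) ≤ x)
        simpa [cnt] using this
      omega
    have hA1 : OS f j (t-1) ≤ x := Nat.sInf_le hj1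
    have hA2 : x ≤ OS f j t := by
      by_contra hcon
      have hle : OS f j t ≤ x - 1 := by omega
      have := le_trans (OS_mem j t hji htm) (cnt_mono_x f t hle)
      omega
    by_cases hcase : j + 1 ≤ x
    · refine ⟨⟨j, hji⟩, ?_, ?_⟩ <;> dsimp only
      · by_cases h1 : t = 1
        · simp [h1]; omega
        · have : t - 1 ≠ 0 := by omega
          rw [if_neg this]
          exact max_le hA1 hcase
      · rw [if_neg (by omega : t ≠ 0)]
        exact le_trans hA2 (le_max_left _ _)
    · have hxj : x - 1 < j := by omega
      refine ⟨⟨x - 1, by omega⟩, ?_, ?_⟩ <;> dsimp only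
      · by_cases h1 : t = 1
        · simp [h1]; omega
        · have hne : t - 1 ≠ 0 := by omega
          rw [if_neg hne]
          have := OS_mono_j (x-1) j (t-1) (by omega) hji (by omega)
          exact max_le (le_trans this hA1) (by omega)
      · rw [if_neg (by omega : t ≠ 0)]
        have : x ≤ x - 1 + 1 := by omega
        exact le_trans this (le_max_right _ _)

/-- extend an increasing polyomino to a full nondecreasing function. -/
lemma clamp_inc (Q : MonoPoly m n) (hQ : Q.Increasing) :
    ∃ f : ℕ → ℕ, IncFull m n f ∧
      ∀ k l : ℕ, (k, l) ∈ Q.cells → f (k - 1) ≤ l ∧ l ≤ f k := by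
  have hr := Q.one_le_r
  have hrs := Q.r_le_s
  have hsm := Q.s_le_m
  refine ⟨fun t => Q.P (max (Q.r - 1) (min t Q.s)), ⟨?_, ?_⟩, ?_⟩
  · intro t ht
    exact Q.val_mem _ (by omega) (by omega)
  · intro t u htu hum
    exact hQ _ _ (by omega) (by omega) (by omega)
  · intro k l hc
    obtain ⟨hk1, hk2, hk3, hk4⟩ := hc
    simp only at hk1 hk2 hk3 hk4 ⊢
    have e1 : max (Q.r - 1) (min k Q.s) = k := by omega
    have e2 : max (Q.r - 1) (min (k - 1) Q.s) = k - 1 := by omega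
    rw [e1, e2]
    have hP : Q.P (k - 1) ≤ Q.P k := hQ (k - 1) k (by omega) (by omega) (by omega)
    omega

/-- extend a decreasing polyomino to a full function and reflect it. -/
lemma clamp_dec (Q : MonoPoly m n) (hQ : Q.Decreasing) :
    ∃ f : ℕ → ℕ, IncFull m n f ∧
      ∀ k l : ℕ, (k, l) ∈ Q.cells → f (k - 1) ≤ n + 1 - l ∧ n + 1 - l ≤ f k := by
  have hr := Q.one_le_r
  have hrs := Q.r_le_s
  have hsm := Q.s_le_m
  refine ⟨fun t => n + 1 - Q.P (max (Q.r - 1) (min t Q.s)), ⟨?_, ?_⟩, ?_⟩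
  · intro t ht
    have := Q.val_mem (max (Q.r - 1) (min t Q.s)) (by omega) (by omega)
    dsimp only
    omega
  · intro t u htu hum
    have := hQ (max (Q.r - 1) (min t Q.s)) (max (Q.r - 1) (min u Q.s))
      (by omega) (by omega) (by omega)
    dsimp only
    omega
  · intro k l hc
    obtain ⟨hk1, hk2, hk3, hk4⟩ := hc
    simp only at hk1 hk2 hk3 hk4 ⊢
    have e1 : max (Q.r - 1) (min k Q.s) = k := by omega
    have e2 : max (Q.r - 1) (min (k - 1) Q.s) = k - 1 := by omega
    rw [e1, e2]
    have hP : Q.P k ≤ Q.P (k - 1) := hQ (k - 1) k (by omega) (by omega) (by omega)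
    have hb1 := Q.val_mem (k - 1) (by omega) (by omega)
    have hb2 := Q.val_mem k (by omega) (by omega)
    omega

end Stmt12Aux

/-- If `m, n ≥ 1`, `n ≥ i + d` and `R_{m×n}` admits an `(i,d)`-covering, then it
admits one with all tiles fully defined on `{0,…,m}` such that `I_j(0) = j` for
`1 ≤ j ≤ i` and `D_k(0) = n + 1 - k` for `1 ≤ k ≤ d`. -/
theorem stmt12 (m n i d : ℕ) (hm : 1 ≤ m) (hn : 1 ≤ n) (hnid : i + d ≤ n)
    (h : ∃ (F : Fin i → MonoPoly m n) (G : Fin d → MonoPoly m n),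
        IsIDCovering m n i d F G) :
    ∃ (F : Fin i → MonoPoly m n) (G : Fin d → MonoPoly m n),
      IsIDCovering m n i d F G ∧
      (∀ a : Fin i, (F a).Full ∧ (F a).P 0 = a.val + 1) ∧
      (∀ b : Fin d, (G b).Full ∧ (G b).P 0 = n - b.val) := by
  obtain ⟨F0, G0, hInc, hDec, hcov⟩ := h
  choose fI hfI hfI2 using fun a : Fin i => Stmt12Aux.clamp_inc (F0 a) (hInc a)
  choose fD hfD hfD2 using fun b : Fin d => Stmt12Aux.clamp_dec (G0 b) (hDec b)
  obtain ⟨g, hg1, hg2, hg3⟩ := Stmt12Aux.core (m := m) (by omega : i ≤ n) fI hfI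
  obtain ⟨g', hg'1, hg'2, hg'3⟩ := Stmt12Aux.core (m := m) (by omega : d ≤ n) fD hfD
  refine ⟨fun a => ⟨1, m, g a, le_rfl, hm, le_rfl,
      fun t _ ht => (hg1 a).1 t ht,
      Or.inl (fun t u _ htu hum => (hg1 a).2 t u htu hum)⟩,
    fun b => ⟨1, m, fun t => n + 1 - g' b t, le_rfl, hm, le_rfl,
      fun t _ ht => by have := (hg'1 b).1 t ht; omega,
      Or.inr (fun t u _ htu hum => by
        have := (hg'1 b).2 t u htu hum; omega)⟩,
    ⟨?_, ?_, ?_⟩, ?_, ?_⟩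
  · intro a t u _ htu hum
    exact (hg1 a).2 t u htu hum
  · intro b t u _ htu hum
    have := (hg'1 b).2 t u htu hum
    simp only
    omega
  · intro k l hk1 hkm hl1 hln
    rcases hcov k l hk1 hkm hl1 hln with ⟨a, hc⟩ | ⟨b, hc⟩
    · obtain ⟨a', ha'1, ha'2⟩ := hg3 k l hk1 hkm ⟨a, hfI2 a k l hc⟩
      refine Or.inl ⟨a', ?_⟩
      simp only [MonoPoly.cells, Set.mem_setOf_eq]
      exact ⟨hk1, hkm, le_trans (min_le_left _ _) ha'1,
        le_trans ha'2 (le_max_right _ _)⟩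
    · obtain ⟨b', hb'1, hb'2⟩ := hg'3 k (n + 1 - l) hk1 hkm ⟨b, hfD2 b k l hc⟩
      refine Or.inr ⟨b', ?_⟩
      simp only [MonoPoly.cells, Set.mem_setOf_eq]
      have hv1 := (hg'1 b').1 (k - 1) (by omega)
      have hv2 := (hg'1 b').1 k hkm
      refine ⟨hk1, hkm, ?_, ?_⟩ <;> omega
  · intro a
    exact ⟨⟨rfl, rfl⟩, hg2 a⟩
  · intro b
    refine ⟨⟨rfl, rfl⟩, ?_⟩
    simp only [hg'2 b]
    omega
end

section
/- Let e, i, d be natural numbers and set m̃(e,i,d) := m(e+i+d, i, d), where m(n, i, d) ∈ ℕ ∪ {∞} is the supremum of all m such that R_{m×n} admits an (i,d)-covering. If i ≥ e, then m̃(e,i,d) ≥ d + e + m̃(e, i−e, d); if d ≥ e, then m̃(e,i,d) ≥ i + e + m̃(e, i, d−e). Equivalently: if i ≥ e and R_{m×(e+i+d)} admits an (i−e, d)-covering, then R_{(m+d+e)×(e+i+d)} admits an (i,d)-covering; and symmetrically in the roles of i and d. -/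
/-! ### Auxiliary development -/


def cntf {p : ℕ} (f : Fin p → ℕ → ℕ) (x t : ℕ) : ℕ :=
  (Finset.univ.filter (fun a => f a t ≤ x)).card

noncomputable def Tsort {p : ℕ} (f : Fin p → ℕ → ℕ) (j : Fin p) (t : ℕ) : ℕ :=
  sInf {x | (j : ℕ) + 1 ≤ cntf f x t}

lemma cntf_le {p : ℕ} (f : Fin p → ℕ → ℕ) (x t : ℕ) : cntf f x t ≤ p := by
  simpa [cntf] using Finset.card_filter_le Finset.univ (fun a => f a t ≤ x)

lemma cntf_all {p n' : ℕ} {f : Fin p → ℕ → ℕ} {t : ℕ}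
    (hb : ∀ a, f a t ≤ n') : cntf f n' t = p := by
  unfold cntf
  rw [Finset.filter_true_of_mem (fun a _ => hb a)]
  simp

lemma Tsort_spec {p n' : ℕ} {f : Fin p → ℕ → ℕ} (j : Fin p) (t : ℕ)
    (hb : ∀ a, f a t ≤ n') : (j : ℕ) + 1 ≤ cntf f (Tsort f j t) t := by
  have hne : Tsort f j t ∈ {x | (j : ℕ) + 1 ≤ cntf f x t} := by
    apply Nat.sInf_mem
    exact ⟨n', by simp only [Set.mem_setOf_eq, cntf_all hb]; omega⟩
  exact hne

lemma Tsort_le {p n' : ℕ} {f : Fin p → ℕ → ℕ} (j : Fin p) (t : ℕ)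
    (hb : ∀ a, f a t ≤ n') : Tsort f j t ≤ n' := by
  apply Nat.sInf_le
  simp only [Set.mem_setOf_eq, cntf_all hb]
  omega

lemma Tsort_pos {p n' : ℕ} {f : Fin p → ℕ → ℕ} (j : Fin p) (t : ℕ)
    (hb : ∀ a, f a t ≤ n') (hb1 : ∀ a, 1 ≤ f a t) : 1 ≤ Tsort f j t := by
  by_contra hcon
  have h0 : Tsort f j t = 0 := by omega
  have hs := Tsort_spec j t hb
  rw [h0] at hs
  have hpos : 0 < cntf f 0 t := by omega
  rw [cntf, Finset.card_pos] at hpos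
  obtain ⟨a, ha⟩ := hpos
  simp only [Finset.mem_filter] at ha
  have := hb1 a
  omega

lemma cntf_anti {p : ℕ} {f : Fin p → ℕ → ℕ} {t t' : ℕ} (x : ℕ)
    (hm : ∀ a, f a t ≤ f a t') : cntf f x t' ≤ cntf f x t := by
  apply Finset.card_le_card
  intro a ha
  simp only [Finset.mem_filter, Finset.mem_univ, true_and] at *
  exact le_trans (hm a) ha

lemma Tsort_mono_t {p n' : ℕ} {f : Fin p → ℕ → ℕ} (j : Fin p) {t t' : ℕ}
    (hm : ∀ a, f a t ≤ f a t') (hb : ∀ a, f a t' ≤ n') :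
    Tsort f j t ≤ Tsort f j t' := by
  apply Nat.sInf_le
  simp only [Set.mem_setOf_eq]
  calc (j : ℕ) + 1 ≤ cntf f (Tsort f j t') t' := Tsort_spec j t' hb
    _ ≤ cntf f (Tsort f j t') t := cntf_anti _ hm

lemma Tsort_mono_j {p : ℕ} {f : Fin p → ℕ → ℕ} {j j' : Fin p} (t : ℕ)
    (hjj : (j : ℕ) ≤ (j' : ℕ)) {n' : ℕ} (hb : ∀ a, f a t ≤ n') :
    Tsort f j t ≤ Tsort f j' t := by
  apply Nat.sInf_le
  simp only [Set.mem_setOf_eq]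
  calc (j : ℕ) + 1 ≤ (j' : ℕ) + 1 := by omega
    _ ≤ cntf f (Tsort f j' t) t := Tsort_spec j' t hb

lemma Tsort_cov {p n' : ℕ} {f : Fin p → ℕ → ℕ} {a : Fin p} {t l : ℕ}
    (h1 : f a t ≤ l) (h2 : l ≤ f a (t+1))
    (hm : ∀ a', f a' t ≤ f a' (t+1)) (hb2 : ∀ a', f a' (t+1) ≤ n') :
    ∃ j : Fin p, Tsort f j t ≤ l ∧ l ≤ Tsort f j (t+1) := by
  have haf : a ∈ Finset.univ.filter (fun a' => f a' t ≤ l) := by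
    simp only [Finset.mem_filter, Finset.mem_univ, true_and]; exact h1
  have hj1 : 1 ≤ cntf f l t := Finset.card_pos.mpr ⟨a, haf⟩
  have hjp : cntf f l t ≤ p := cntf_le f l t
  refine ⟨⟨cntf f l t - 1, by omega⟩, ?_, ?_⟩
  · apply Nat.sInf_le
    simp only [Set.mem_setOf_eq]
    omega
  · by_contra hcon
    push_neg at hcon
    have hspec := Tsort_spec (f := f) ⟨cntf f l t - 1, by omega⟩ (t+1) hb2
    have hsub : Finset.univ.filter
        (fun a' => f a' (t+1) ≤ Tsort f ⟨cntf f l t - 1, by omega⟩ (t+1)) ⊆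
        Finset.univ.filter (fun a' => f a' t ≤ l) := by
      intro a' ha'
      simp only [Finset.mem_filter, Finset.mem_univ, true_and] at *
      have := hm a'; omega
    have hanotin : a ∉ Finset.univ.filter
        (fun a' => f a' (t+1) ≤ Tsort f ⟨cntf f l t - 1, by omega⟩ (t+1)) := by
      simp only [Finset.mem_filter, Finset.mem_univ, true_and]
      omega
    have hlt : (Finset.univ.filter
        (fun a' => f a' (t+1) ≤ Tsort f ⟨cntf f l t - 1, by omega⟩ (t+1))).card
        < (Finset.univ.filter (fun a' => f a' t ≤ l)).card :=
      Finset.card_lt_card ⟨hsub, fun hBA => hanotin (hBA haf)⟩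
    have hc2 : cntf f (Tsort f ⟨cntf f l t - 1, by omega⟩ (t+1)) (t+1)
        < cntf f l t := hlt
    simp only [Fin.val_mk] at hspec
    omega

lemma Tsort_cov_dec {d n' : ℕ} {h : Fin d → ℕ → ℕ} {b : Fin d} {t l : ℕ}
    (h1 : h b (t+1) ≤ l) (h2 : l ≤ h b t)
    (hm : ∀ b', h b' (t+1) ≤ h b' t) (hb2 : ∀ b', h b' t ≤ n') :
    ∃ k : Fin d, Tsort h k (t+1) ≤ l ∧ l ≤ Tsort h k t := by
  have hbf : b ∈ Finset.univ.filter (fun b' => h b' (t+1) ≤ l) := by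
    simp only [Finset.mem_filter, Finset.mem_univ, true_and]; exact h1
  have hk1 : 1 ≤ cntf h l (t+1) := Finset.card_pos.mpr ⟨b, hbf⟩
  have hkp : cntf h l (t+1) ≤ d := cntf_le h l (t+1)
  refine ⟨⟨cntf h l (t+1) - 1, by omega⟩, ?_, ?_⟩
  · apply Nat.sInf_le
    simp only [Set.mem_setOf_eq]
    omega
  · by_contra hcon
    push_neg at hcon
    have hspec := Tsort_spec (f := h) ⟨cntf h l (t+1) - 1, by omega⟩ t hb2
    have hsub : Finset.univ.filter
        (fun b' => h b' t ≤ Tsort h ⟨cntf h l (t+1) - 1, by omega⟩ t) ⊆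
        Finset.univ.filter (fun b' => h b' (t+1) ≤ l) := by
      intro b' hb'
      simp only [Finset.mem_filter, Finset.mem_univ, true_and] at *
      have := hm b'; omega
    have hbnotin : b ∉ Finset.univ.filter
        (fun b' => h b' t ≤ Tsort h ⟨cntf h l (t+1) - 1, by omega⟩ t) := by
      simp only [Finset.mem_filter, Finset.mem_univ, true_and]
      omega
    have hlt : (Finset.univ.filter
        (fun b' => h b' t ≤ Tsort h ⟨cntf h l (t+1) - 1, by omega⟩ t)).card
        < (Finset.univ.filter (fun b' => h b' (t+1) ≤ l)).card :=
      Finset.card_lt_card ⟨hsub, fun hBA => hbnotin (hBA hbf)⟩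
    have hc2 : cntf h (Tsort h ⟨cntf h l (t+1) - 1, by omega⟩ t) t
        < cntf h l (t+1) := hlt
    simp only [Fin.val_mk] at hspec
    omega

def Cov (M n p d : ℕ) (f : Fin p → ℕ → ℕ) (h : Fin d → ℕ → ℕ) : Prop :=
  (∀ a t, 1 ≤ f a t ∧ f a t ≤ n) ∧
  (∀ b t, 1 ≤ h b t ∧ h b t ≤ n) ∧
  (∀ a, Monotone (f a)) ∧
  (∀ b, Antitone (h b)) ∧
  (∀ t l, t < M → 1 ≤ l → l ≤ n →
    (∃ a, f a t ≤ l ∧ l ≤ f a (t+1)) ∨ (∃ b, h b (t+1) ≤ l ∧ l ≤ h b t))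

def ECov (M n p d : ℕ) : Prop := ∃ f h, Cov M n p d f h


lemma ECov_of_isid {m n i d : ℕ} {F : Fin i → MonoPoly m n} {G : Fin d → MonoPoly m n}
    (H : IsIDCovering m n i d F G) : ECov m n i d := by
  obtain ⟨hF, hG, hcov⟩ := H
  refine ⟨fun a t => (F a).P (max ((F a).r - 1) (min t (F a).s)),
          fun b t => (G b).P (max ((G b).r - 1) (min t (G b).s)), ?_, ?_, ?_, ?_, ?_⟩
  · intro a t
    have h1 := (F a).r_le_s
    exact (F a).val_mem _ (le_max_left _ _) (by omega)
  · intro b t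
    have h1 := (G b).r_le_s
    exact (G b).val_mem _ (le_max_left _ _) (by omega)
  · intro a t u htu
    have h1 := (F a).r_le_s
    exact hF a _ _ (le_max_left _ _) (by omega) (by omega)
  · intro b t u htu
    have h1 := (G b).r_le_s
    exact hG b _ _ (le_max_left _ _) (by omega) (by omega)
  · intro t l ht hl1 hln
    rcases hcov (t+1) l (by omega) (by omega) hl1 hln with ⟨a, hc⟩ | ⟨b, hc⟩
    · left
      simp only [MonoPoly.cells, Set.mem_setOf_eq] at hc
      obtain ⟨hr, hs, hmin, hmax⟩ := hc
      have h1 := (F a).one_le_r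
      have e0 : max ((F a).r - 1) (min t (F a).s) = t := by omega
      have e1 : max ((F a).r - 1) (min (t+1) (F a).s) = t+1 := by omega
      have hmono : (F a).P t ≤ (F a).P (t+1) := hF a _ _ (by omega) (by omega) (by omega)
      rw [show (t+1) - 1 = t by omega] at hmin hmax
      refine ⟨a, ?_, ?_⟩
      · dsimp only; rw [e0]; omega
      · dsimp only; rw [e1]; omega
    · right
      simp only [MonoPoly.cells, Set.mem_setOf_eq] at hc
      obtain ⟨hr, hs, hmin, hmax⟩ := hc
      have h1 := (G b).one_le_r
      have e0 : max ((G b).r - 1) (min t (G b).s) = t := by omega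
      have e1 : max ((G b).r - 1) (min (t+1) (G b).s) = t+1 := by omega
      have hmono : (G b).P (t+1) ≤ (G b).P t := hG b _ _ (by omega) (by omega) (by omega)
      rw [show (t+1) - 1 = t by omega] at hmin hmax
      refine ⟨b, ?_, ?_⟩
      · dsimp only; rw [e1]; omega
      · dsimp only; rw [e0]; omega

lemma isid_of_ECov {M n i d : ℕ} (hM : 1 ≤ M) (H : ECov M n i d) :
    ∃ (F : Fin i → MonoPoly M n) (G : Fin d → MonoPoly M n), IsIDCovering M n i d F G := by
  obtain ⟨f, h, hfb, hhb, hfm, hhm, hcov⟩ := H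
  refine ⟨fun a => ⟨1, M, f a, le_rfl, hM, le_rfl, fun t _ _ => hfb a t,
            Or.inl (fun t u _ htu _ => hfm a htu)⟩,
          fun b => ⟨1, M, h b, le_rfl, hM, le_rfl, fun t _ _ => hhb b t,
            Or.inr (fun t u _ htu _ => hhm b htu)⟩, ?_, ?_, ?_⟩
  · intro a t u _ htu _; exact hfm a htu
  · intro b t u _ htu _; exact hhm b htu
  · intro k l hk1 hkM hl1 hln
    rcases hcov (k-1) l (by omega) hl1 hln with ⟨a, h1, h2⟩ | ⟨b, h1, h2⟩
    · left
      rw [show k - 1 + 1 = k by omega] at h2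
      have hm := hfm a (show k - 1 ≤ k by omega)
      exact ⟨a, hk1, hkM, by dsimp only; omega, by dsimp only; omega⟩
    · right
      rw [show k - 1 + 1 = k by omega] at h1
      have hm := hhm b (show k - 1 ≤ k by omega)
      exact ⟨b, hk1, hkM, by dsimp only; omega, by dsimp only; omega⟩

lemma ECov_flip {M n p d : ℕ} (H : ECov M n p d) : ECov M n d p := by
  obtain ⟨f, h, hfb, hhb, hfm, hhm, hcov⟩ := H
  refine ⟨fun b t => n + 1 - h b t, fun a t => n + 1 - f a t, ?_, ?_, ?_, ?_, ?_⟩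
  · intro b t; dsimp only; have := hhb b t; omega
  · intro a t; dsimp only; have := hfb a t; omega
  · intro b t u htu
    dsimp only; have := hhm b htu; have := hhb b t; have := hhb b u; omega
  · intro a t u htu
    dsimp only; have := hfm a htu; have := hfb a t; have := hfb a u; omega
  · intro t l ht hl1 hln
    rcases hcov t (n + 1 - l) ht (by omega) (by omega) with ⟨a, h1, h2⟩ | ⟨b, h1, h2⟩
    · right
      refine ⟨a, ?_, ?_⟩ <;> (dsimp only; have := hfb a t; have := hfb a (t+1); omega)
    · left
      refine ⟨b, ?_, ?_⟩ <;> (dsimp only; have := hhb b t; have := hhb b (t+1); omega)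

lemma ECov_clip {M n N p d : ℕ} (hn : 1 ≤ n) (hnN : n ≤ N) (H : ECov M N p d) :
    ECov M n p d := by
  obtain ⟨f, h, hfb, hhb, hfm, hhm, hcov⟩ := H
  refine ⟨fun a t => min (f a t) n, fun b t => min (h b t) n, ?_, ?_, ?_, ?_, ?_⟩
  · intro a t; dsimp only; have := hfb a t; omega
  · intro b t; dsimp only; have := hhb b t; omega
  · intro a t u htu; dsimp only; have := hfm a htu; omega
  · intro b t u htu; dsimp only; have := hhm b htu; omega
  · intro t l ht hl1 hln
    rcases hcov t l ht hl1 (by omega) with ⟨a, h1, h2⟩ | ⟨b, h1, h2⟩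
    · exact Or.inl ⟨a, by dsimp only; omega, by dsimp only; omega⟩
    · exact Or.inr ⟨b, by dsimp only; omega, by dsimp only; omega⟩

/-- Constant polyominoes cover a rectangle of height `i + d` of any width. -/
lemma ECov_const (M i d : ℕ) : ECov M (i+d) i d := by
  refine ⟨fun a _ => (a : ℕ) + 1, fun b _ => i + (b : ℕ) + 1, ?_, ?_, ?_, ?_, ?_⟩
  · intro a t; have := a.isLt; dsimp only; omega
  · intro b t; have := b.isLt; dsimp only; omega
  · intro a t u _; exact le_rfl
  · intro b t u _; exact le_rfl
  · intro t l ht hl1 hln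
    by_cases hc : l ≤ i
    · exact Or.inl ⟨⟨l - 1, by omega⟩, by dsimp only; omega, by dsimp only; omega⟩
    · exact Or.inr ⟨⟨l - i - 1, by omega⟩, by dsimp only; omega, by dsimp only; omega⟩

/-- A single column can be covered as long as there is at least one polyomino. -/
lemma ECov_one {n p d : ℕ} (hpd : 1 ≤ p + d) (hn : 1 ≤ n) : ECov 1 n p d := by
  rcases Nat.eq_zero_or_pos p with hp | hp
  · refine ⟨fun _ _ => 1, fun b t => if 1 ≤ t then 1 else n, ?_, ?_, ?_, ?_, ?_⟩
    · intro a t; exact ⟨le_rfl, hn⟩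
    · intro b t; dsimp only; split <;> omega
    · intro a t u htu; exact le_rfl
    · intro b t u htu; dsimp only; split <;> split <;> omega
    · intro t l ht hl1 hln
      right
      refine ⟨⟨0, by omega⟩, ?_, ?_⟩ <;> dsimp only
      · rw [if_pos (by omega)]; omega
      · rw [if_neg (by omega)]; omega
  · refine ⟨fun a t => if 1 ≤ t then n else 1, fun _ _ => 1, ?_, ?_, ?_, ?_, ?_⟩
    · intro a t; dsimp only; split <;> omega
    · intro b t; exact ⟨le_rfl, hn⟩
    · intro a t u htu; dsimp only; split <;> split <;> omega
    · intro b t u htu; exact le_rfl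
    · intro t l ht hl1 hln
      left
      refine ⟨⟨0, hp⟩, ?_, ?_⟩ <;> dsimp only
      · rw [if_neg (by omega)]; omega
      · rw [if_pos (by omega)]; omega

/-- The cascade: `e` increasing polyominoes cover `R_{e × 2e}`. -/
lemma ECov_cascade {e : ℕ} (he : 1 ≤ e) : ECov e (e+e) e 0 := by
  refine ⟨fun j t => if t + (j : ℕ) + 1 ≤ e then (j : ℕ) + 1 else e + (j : ℕ) + 1,
          fun b _ => 1, ?_, ?_, ?_, ?_, ?_⟩
  · intro a t; have := a.isLt; dsimp only; split <;> omega
  · intro b t; exact ⟨le_rfl, by dsimp only; omega⟩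
  · intro a t u htu; dsimp only; split <;> split <;> omega
  · intro b t u htu; exact le_rfl
  · intro t l ht hl1 hln
    left
    by_cases hlow : t + l + 1 ≤ e
    · refine ⟨⟨l - 1, by omega⟩, ?_, ?_⟩ <;> dsimp only <;> rw [if_pos (by omega)] <;> omega
    · by_cases hmid : l ≤ e + e - t
      · refine ⟨⟨e - t - 1, by omega⟩, ?_, ?_⟩ <;> dsimp only
        · rw [if_pos (by omega)]; omega
        · rw [if_neg (by omega)]; omega
      · refine ⟨⟨l - e - 1, by omega⟩, ?_, ?_⟩ <;> dsimp only <;> rw [if_neg (by omega)] <;> omega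

lemma ECov_surgery {e p d m : ℕ} (he : 1 ≤ e) (hm : 1 ≤ m)
    (H : ECov m (e+p+d) p d) : ECov (m+d+e) (e+(p+e)+d) (p+e) d := by
  obtain ⟨f, h, hfb, hhb, hfm, hhm, hcov⟩ := H
  have hfb' : ∀ t a, f a t ≤ e+p+d := fun t a => (hfb a t).2
  have hfb1 : ∀ t a, 1 ≤ f a t := fun t a => (hfb a t).1
  have hhb' : ∀ t a, h a t ≤ e+p+d := fun t a => (hhb a t).2
  have hhb1 : ∀ t a, 1 ≤ h a t := fun t a => (hhb a t).1
  -- pinned sorted curves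
  set Tp : Fin p → ℕ → ℕ := fun j t => max ((j:ℕ)+1) (Tsort f j t) with hTp
  set Sp : Fin d → ℕ → ℕ := fun k t => min (e+p+((k:ℕ)+1)) (Tsort h k t) with hSp
  have hTp_lb : ∀ (j : Fin p) t, (j:ℕ)+1 ≤ Tp j t := fun j t => le_max_left _ _
  have hTp_ub : ∀ (j : Fin p) t, Tp j t ≤ e+p+d := by
    intro j t
    have h1 := Tsort_le j t (hfb' t)
    have := j.isLt
    simp only [hTp]; omega
  have hTp_mono : ∀ (j : Fin p), Monotone (Tp j) := by
    intro j
    apply monotone_nat_of_le_succ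
    intro t
    have := Tsort_mono_t (f := f) j (fun a => hfm a (by omega : t ≤ t+1)) (hfb' (t+1))
    simp only [hTp]; omega
  have hSp_ub : ∀ (k : Fin d) t, Sp k t ≤ e+p+((k:ℕ)+1) := fun k t => min_le_left _ _
  have hSp_lb : ∀ (k : Fin d) t, 1 ≤ Sp k t := by
    intro k t
    have h1 := Tsort_pos (f := h) k t (hhb' t) (hhb1 t)
    simp only [hSp]; omega
  have hSp_anti : ∀ (k : Fin d), Antitone (Sp k) := by
    intro k
    apply antitone_nat_of_succ_le
    intro t
    have := Tsort_mono_t (f := h) k (fun b => hhm b (by omega : t ≤ t+1)) (hhb' t)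
    simp only [hSp]; omega
  -- pinned coverage of the old rectangle
  have pcov : ∀ t l, t < m → 1 ≤ l → l ≤ e+p+d →
      (∃ j, Tp j t ≤ l ∧ l ≤ Tp j (t+1)) ∨ (∃ k, Sp k (t+1) ≤ l ∧ l ≤ Sp k t) := by
    intro t l ht hl1 hln
    rcases hcov t l ht hl1 hln with ⟨a, h1, h2⟩ | ⟨b, h1, h2⟩
    · left
      obtain ⟨j, hj1, hj2⟩ := Tsort_cov h1 h2 (fun a' => hfm a' (by omega : t ≤ t+1)) (hfb' (t+1))
      by_cases hc : (j:ℕ)+1 ≤ l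
      · exact ⟨j, by simp only [hTp]; omega, by simp only [hTp]; omega⟩
      · have hlp : l - 1 < p := by have := j.isLt; omega
        have hmono := Tsort_mono_j (f:=f) (j := ⟨l-1, hlp⟩) (j' := j) t
          (by (try simp only [Fin.val_mk]); omega) (hfb' t)
        refine ⟨⟨l-1, hlp⟩, ?_, ?_⟩
        · simp only [hTp, Fin.val_mk]; omega
        · simp only [hTp, Fin.val_mk]; omega
    · right
      obtain ⟨k, hk1, hk2⟩ := Tsort_cov_dec h1 h2 (fun b' => hhm b' (by omega : t ≤ t+1)) (hhb' t)
      by_cases hc : l ≤ e+p+((k:ℕ)+1)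
      · exact ⟨k, by simp only [hSp]; omega, by simp only [hSp]; omega⟩
      · have hkd : l - e - p - 1 < d := by omega
        have hmono := Tsort_mono_j (f:=h) (j := k) (j' := ⟨l-e-p-1, hkd⟩) t
          (by (try simp only [Fin.val_mk]); have := k.isLt; omega) (hhb' t)
        refine ⟨⟨l-e-p-1, hkd⟩, ?_, ?_⟩
        · simp only [hSp, Fin.val_mk]; omega
        · simp only [hSp, Fin.val_mk]; omega
  -- the new covering
  refine ⟨fun j t => if hj : (j:ℕ) < p
            then (if t ≤ d+e then (j:ℕ)+1 else Tp ⟨(j:ℕ), hj⟩ (t-(d+e)))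
            else (if t + ((j:ℕ)-p) + 1 ≤ d+e then p+((j:ℕ)-p)+1 else (e+p+d)+((j:ℕ)-p)+1),
          fun k t => if t+1 ≤ (k:ℕ)+1 then p+e+e+((k:ℕ)+1)
            else if t ≤ d+e then p+e+((k:ℕ)+1) else Sp k (t-(d+e)),
          ?_, ?_, ?_, ?_, ?_⟩
  · -- inc bounds
    intro a t
    dsimp only
    split
    · rename_i hj
      split
      · omega
      · have h1 := hTp_lb ⟨(a:ℕ), hj⟩ (t-(d+e))
        have h2 := hTp_ub ⟨(a:ℕ), hj⟩ (t-(d+e))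
        simp only [Fin.val_mk] at h1 h2
        omega
    · have := a.isLt
      split <;> omega
  · -- dec bounds
    intro b t
    dsimp only
    have := b.isLt
    split
    · omega
    · split
      · omega
      · have h1 := hSp_lb b (t-(d+e))
        have h2 := hSp_ub b (t-(d+e))
        omega
  · -- inc monotone
    intro a
    apply monotone_nat_of_le_succ
    intro t
    dsimp only
    split
    · rename_i hj
      by_cases hc1 : t+1 ≤ d+e
      · rw [if_pos (by omega), if_pos hc1]
      · by_cases hc2 : t ≤ d+e
        · rw [if_pos hc2, if_neg hc1]
          have := hTp_lb ⟨(a:ℕ), hj⟩ (t+1-(d+e))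
          simp only [Fin.val_mk] at this
          omega
        · rw [if_neg hc2, if_neg hc1]
          have := hTp_mono ⟨(a:ℕ), hj⟩ (show t-(d+e) ≤ t+1-(d+e) by omega)
          exact this
    · by_cases hc1 : t+1+((a:ℕ)-p)+1 ≤ d+e
      · rw [if_pos (by omega), if_pos hc1]
      · by_cases hc2 : t+((a:ℕ)-p)+1 ≤ d+e
        · rw [if_pos hc2, if_neg hc1]; omega
        · rw [if_neg hc2, if_neg hc1]
  · -- dec antitone
    intro b
    apply antitone_nat_of_succ_le
    intro t
    dsimp only
    by_cases hc1 : t+1+1 ≤ (b:ℕ)+1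
    · rw [if_pos hc1, if_pos (by omega)]
    · rw [if_neg hc1]
      by_cases hc2 : t+1 ≤ (b:ℕ)+1
      · rw [if_pos hc2]
        have := b.isLt
        rw [if_pos (by omega)]
        omega
      · rw [if_neg hc2]
        by_cases hc3 : t+1 ≤ d+e
        · rw [if_pos hc3, if_pos (by omega)]
        · by_cases hc4 : t ≤ d+e
          · rw [if_pos hc4, if_neg hc3]
            have h1 := hSp_ub b (t+1-(d+e))
            omega
          · rw [if_neg hc4, if_neg hc3]
            exact hSp_anti b (show t-(d+e) ≤ t+1-(d+e) by omega)
  · -- coverage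
    intro t l ht hl1 hln
    by_cases hc1 : t + 1 ≤ d
    · -- phase D
      by_cases hla : l ≤ p
      · left
        refine ⟨⟨l-1, by omega⟩, ?_, ?_⟩ <;> dsimp only <;>
          rw [dif_pos (show ((⟨l-1, by omega⟩ : Fin (p+e)):ℕ) < p by (try simp only [Fin.val_mk]); omega)] <;>
          (try simp only [Fin.val_mk]) <;> rw [if_pos (by omega)] <;> omega
      · by_cases hlb : l ≤ p+e
        · left
          refine ⟨⟨l-1, by omega⟩, ?_, ?_⟩ <;> dsimp only <;>
            rw [dif_neg (by (try simp only [Fin.val_mk]); omega)] <;>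
            (try simp only [Fin.val_mk]) <;> rw [if_pos (by omega)] <;> omega
        · right
          by_cases hld : l ≤ p+e+t
          · refine ⟨⟨l-p-e-1, by omega⟩, ?_, ?_⟩ <;> dsimp only <;>
              (try simp only [Fin.val_mk]) <;> rw [if_neg (by omega), if_pos (by omega)] <;> omega
          · by_cases hle : l ≤ p+e+e+t+1
            · refine ⟨⟨t, by omega⟩, ?_, ?_⟩ <;> dsimp only <;> (try simp only [Fin.val_mk])
              · rw [if_neg (by omega), if_pos (by omega)]; omega
              · rw [if_pos (by omega)]; omega
            · refine ⟨⟨l-p-e-e-1, by omega⟩, ?_, ?_⟩ <;> dsimp only <;>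
                (try simp only [Fin.val_mk]) <;> rw [if_pos (by omega)] <;> omega
    · by_cases hc2 : t+1 ≤ d+e
      · -- phase I : rising new inc with idx d+e-t-1
        by_cases hla : l ≤ p
        · left
          refine ⟨⟨l-1, by omega⟩, ?_, ?_⟩ <;> dsimp only <;>
            rw [dif_pos (show ((⟨l-1, by omega⟩ : Fin (p+e)):ℕ) < p by (try simp only [Fin.val_mk]); omega)] <;>
            (try simp only [Fin.val_mk]) <;> rw [if_pos (by omega)] <;> omega
        · by_cases hlb : l ≤ p+(d+e-t-1)
          · left
            refine ⟨⟨l-1, by omega⟩, ?_, ?_⟩ <;> dsimp only <;>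
              rw [dif_neg (by (try simp only [Fin.val_mk]); omega)] <;>
              (try simp only [Fin.val_mk]) <;> rw [if_pos (by omega)] <;> omega
          · by_cases hlc : l ≤ (e+p+d)+(d+e-t)
            · left
              refine ⟨⟨p+(d+e-t-1), by omega⟩, ?_, ?_⟩ <;> dsimp only <;>
                rw [dif_neg (by (try simp only [Fin.val_mk]); omega)] <;>
                (try simp only [Fin.val_mk])
              · rw [if_pos (by omega)]; omega
              · rw [if_neg (by omega)]; omega
            · left
              refine ⟨⟨p+(l-(e+p+d)-1), by omega⟩, ?_, ?_⟩ <;> dsimp only <;>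
                rw [dif_neg (by (try simp only [Fin.val_mk]); omega)] <;>
                (try simp only [Fin.val_mk]) <;> rw [if_neg (by omega)] <;> omega
      · by_cases hc3 : t = d+e
        · -- bridge column
          by_cases hla : l ≤ e+p+d
          · rcases pcov 0 l (by omega) hl1 hla with ⟨j, hj1, hj2⟩ | ⟨k, hk1, hk2⟩
            · left
              refine ⟨⟨(j:ℕ), by have := j.isLt; omega⟩, ?_, ?_⟩ <;> dsimp only <;>
                rw [dif_pos (show ((⟨(j:ℕ), by have := j.isLt; omega⟩ : Fin (p+e)):ℕ) < p
                      by (try simp only [Fin.val_mk]); exact j.isLt)]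
              · (try simp only [Fin.val_mk])
                rw [if_pos (by omega)]
                have h0 := hTp_lb j 0
                have : (⟨(j:ℕ), j.isLt⟩ : Fin p) = j := rfl
                omega
              · have heq : (⟨(j:ℕ), j.isLt⟩ : Fin p) = j := rfl
                (try simp only [Fin.val_mk])
                rw [if_neg (by omega)]
                rw [show t+1-(d+e) = 1 by omega]
                convert hj2 using 2 <;> exact Fin.ext rfl
            · right
              refine ⟨k, ?_, ?_⟩ <;> dsimp only
              · rw [if_neg (by have := k.isLt; omega), if_neg (by omega),
                    show t+1-(d+e) = 1 by omega]
                exact hk1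
              · rw [if_neg (by have := k.isLt; omega), if_pos (by omega)]
                have := hSp_ub k 0
                omega
          · -- top band: risen new inc
            left
            refine ⟨⟨p+(l-(e+p+d)-1), by omega⟩, ?_, ?_⟩ <;> dsimp only <;>
              rw [dif_neg (by (try simp only [Fin.val_mk]); omega)] <;>
              (try simp only [Fin.val_mk]) <;> rw [if_neg (by omega)] <;> omega
        · -- replay
          by_cases hla : l ≤ e+p+d
          · rcases pcov (t-(d+e)) l (by omega) hl1 hla with ⟨j, hj1, hj2⟩ | ⟨k, hk1, hk2⟩
            · left
              refine ⟨⟨(j:ℕ), by have := j.isLt; omega⟩, ?_, ?_⟩ <;> dsimp only <;>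
                rw [dif_pos (show ((⟨(j:ℕ), by have := j.isLt; omega⟩ : Fin (p+e)):ℕ) < p
                      by (try simp only [Fin.val_mk]); exact j.isLt)] <;>
                (try simp only [Fin.val_mk]) <;> rw [if_neg (by omega)]
              · convert hj1 using 2 <;> exact Fin.ext rfl
              · rw [show t+1-(d+e) = t-(d+e)+1 by omega]
                convert hj2 using 2 <;> exact Fin.ext rfl
            · right
              refine ⟨k, ?_, ?_⟩ <;> dsimp only
              · rw [if_neg (by have := k.isLt; omega), if_neg (by omega),
                    show t+1-(d+e) = t-(d+e)+1 by omega]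
                exact hk1
              · rw [if_neg (by have := k.isLt; omega), if_neg (by omega)]
                exact hk2
          · left
            refine ⟨⟨p+(l-(e+p+d)-1), by omega⟩, ?_, ?_⟩ <;> dsimp only <;>
              rw [dif_neg (by (try simp only [Fin.val_mk]); omega)] <;>
              (try simp only [Fin.val_mk]) <;> rw [if_neg (by omega)] <;> omega


lemma enat_biSup_eq_top {S : Set ℕ} (H : ∀ N : ℕ, ∃ m ∈ S, N < m) :
    (⨆ m ∈ S, (m : ℕ∞)) = ⊤ := by
  rw [iSup₂_eq_top]
  intro b hb
  lift b to ℕ using hb.ne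
  obtain ⟨m, hmS, hm⟩ := H b
  exact ⟨m, hmS, by exact_mod_cast hm⟩

lemma enat_sup_le {S S' : Set ℕ} {c : ℕ} (hne : S'.Nonempty)
    (H : ∀ m ∈ S', m + c ∈ S) :
    (c : ℕ∞) + ⨆ m ∈ S', (m : ℕ∞) ≤ ⨆ m ∈ S, (m : ℕ∞) := by
  by_cases hb : BddAbove S'
  · have hM := Nat.sSup_mem hne hb
    have hsup : (⨆ m ∈ S', (m : ℕ∞)) = ((sSup S' : ℕ) : ℕ∞) := by
      apply le_antisymm
      · exact iSup₂_le fun m hm => by exact_mod_cast le_csSup hb hm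
      · exact le_iSup₂ (f := fun m (_ : m ∈ S') => (m : ℕ∞)) (sSup S') hM
    rw [hsup, ← Nat.cast_add]
    calc ((c + sSup S' : ℕ) : ℕ∞) = ((sSup S' + c : ℕ) : ℕ∞) := by rw [Nat.add_comm]
      _ ≤ ⨆ m ∈ S, (m : ℕ∞) :=
        le_iSup₂ (f := fun m (_ : m ∈ S) => (m : ℕ∞)) (sSup S' + c) (H _ hM)
  · have htop : (⨆ m ∈ S, (m : ℕ∞)) = ⊤ := by
      apply enat_biSup_eq_top
      intro N
      rw [not_bddAbove_iff] at hb
      obtain ⟨m, hmS, hm⟩ := hb N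
      exact ⟨m + c, H m hmS, by omega⟩
    rw [htop]
    exact le_top


lemma monoPoly_zero_false {n : ℕ} (Q : MonoPoly 0 n) : False := by
  have h1 := Q.one_le_r; have h2 := Q.r_le_s; have h3 := Q.s_le_m; omega

lemma isid_zero {n : ℕ} :
    ∃ (F : Fin 0 → MonoPoly 0 n) (G : Fin 0 → MonoPoly 0 n), IsIDCovering 0 n 0 0 F G := by
  refine ⟨fun a => a.elim0, fun b => b.elim0, fun a => a.elim0, fun b => b.elim0, ?_⟩
  intro k l hk hk0 _ _
  omega

lemma covset_nonempty {n p d : ℕ} (hn : 1 ≤ n) :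
    {m : ℕ | ∃ (F : Fin p → MonoPoly m n) (G : Fin d → MonoPoly m n),
      IsIDCovering m n p d F G}.Nonempty := by
  rcases Nat.eq_zero_or_pos (p + d) with h0 | h1
  · obtain ⟨rfl, rfl⟩ : p = 0 ∧ d = 0 := by omega
    exact ⟨0, isid_zero⟩
  · exact ⟨1, isid_of_ECov le_rfl (ECov_one h1 hn)⟩

lemma core_B1i {e i d m : ℕ} (he : 1 ≤ e) (hei : e ≤ i)
    (H : ∃ (F : Fin (i-e) → MonoPoly m (e+(i-e)+d)) (G : Fin d → MonoPoly m (e+(i-e)+d)),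
      IsIDCovering m (e+(i-e)+d) (i-e) d F G) :
    ∃ (F : Fin i → MonoPoly (m+d+e) (e+i+d)) (G : Fin d → MonoPoly (m+d+e) (e+i+d)),
      IsIDCovering (m+d+e) (e+i+d) i d F G := by
  rcases Nat.eq_zero_or_pos m with hm0 | hm1
  · obtain ⟨F, G, _⟩ := H
    subst hm0
    have hp : i - e = 0 := by
      by_contra hc
      exact monoPoly_zero_false (F ⟨0, by omega⟩)
    have hd : d = 0 := by
      by_contra hc
      exact monoPoly_zero_false (G ⟨0, by omega⟩)
    subst hd
    have hie : i = e := by omega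
    rw [hie]
    have hcas := isid_of_ECov he (ECov_cascade he)
    rw [show (0:ℕ)+0+e = e by omega, show e+e+0 = e+e by omega]
    exact hcas
  · obtain ⟨F, G, hFG⟩ := H
    have h1 : ECov m (e+(i-e)+d) (i-e) d := ECov_of_isid hFG
    have h2 := ECov_surgery he hm1 h1
    rw [show (i-e)+e = i by omega] at h2
    exact isid_of_ECov (by omega) h2

lemma core_B2i {e i d m : ℕ} (he : 1 ≤ e) (hei : e ≤ i)
    (H : ∃ (F : Fin (i-e) → MonoPoly m (e+i+d)) (G : Fin d → MonoPoly m (e+i+d)),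
      IsIDCovering m (e+i+d) (i-e) d F G) :
    ∃ (F : Fin i → MonoPoly (m+d+e) (e+i+d)) (G : Fin d → MonoPoly (m+d+e) (e+i+d)),
      IsIDCovering (m+d+e) (e+i+d) i d F G := by
  rcases Nat.eq_zero_or_pos m with hm0 | hm1
  · obtain ⟨F, G, _⟩ := H
    subst hm0
    have hp : i - e = 0 := by
      by_contra hc
      exact monoPoly_zero_false (F ⟨0, by omega⟩)
    have hd : d = 0 := by
      by_contra hc
      exact monoPoly_zero_false (G ⟨0, by omega⟩)
    subst hd
    have hie : i = e := by omega
    rw [hie]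
    have hcas := isid_of_ECov he (ECov_cascade he)
    rw [show (0:ℕ)+0+e = e by omega, show e+e+0 = e+e by omega]
    exact hcas
  · obtain ⟨F, G, hFG⟩ := H
    have h1 : ECov m (e+i+d) (i-e) d := ECov_of_isid hFG
    have h2 : ECov m (e+(i-e)+d) (i-e) d := ECov_clip (by omega) (by omega) h1
    have h3 := ECov_surgery he hm1 h2
    rw [show (i-e)+e = i by omega] at h3
    exact isid_of_ECov (by omega) h3

lemma core_B1d {e i d m : ℕ} (he : 1 ≤ e) (hed : e ≤ d)
    (H : ∃ (F : Fin i → MonoPoly m (e+i+(d-e))) (G : Fin (d-e) → MonoPoly m (e+i+(d-e))),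
      IsIDCovering m (e+i+(d-e)) i (d-e) F G) :
    ∃ (F : Fin i → MonoPoly (m+i+e) (e+i+d)) (G : Fin d → MonoPoly (m+i+e) (e+i+d)),
      IsIDCovering (m+i+e) (e+i+d) i d F G := by
  rcases Nat.eq_zero_or_pos m with hm0 | hm1
  · obtain ⟨F, G, _⟩ := H
    subst hm0
    have hp : i = 0 := by
      by_contra hc
      exact monoPoly_zero_false (F ⟨0, by omega⟩)
    have hd : d - e = 0 := by
      by_contra hc
      exact monoPoly_zero_false (G ⟨0, by omega⟩)
    subst hp
    have hde : d = e := by omega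
    rw [hde]
    have hcas := isid_of_ECov he (ECov_flip (ECov_cascade he))
    rw [show (0:ℕ)+0+e = e by omega, show e+0+e = e+e by omega]
    exact hcas
  · obtain ⟨F, G, hFG⟩ := H
    have h1 : ECov m (e+i+(d-e)) i (d-e) := ECov_of_isid hFG
    have h2 : ECov m (e+(d-e)+i) (d-e) i := by
      rw [show e+(d-e)+i = e+i+(d-e) by omega]
      exact ECov_flip h1
    have h3 := ECov_surgery he hm1 h2
    rw [show (d-e)+e = d by omega] at h3
    have h4 : ECov (m+i+e) (e+i+d) i d := by
      rw [show e+i+d = e+d+i by omega]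
      exact ECov_flip h3
    exact isid_of_ECov (by omega) h4

lemma core_B2d {e i d m : ℕ} (he : 1 ≤ e) (hed : e ≤ d)
    (H : ∃ (F : Fin i → MonoPoly m (e+i+d)) (G : Fin (d-e) → MonoPoly m (e+i+d)),
      IsIDCovering m (e+i+d) i (d-e) F G) :
    ∃ (F : Fin i → MonoPoly (m+i+e) (e+i+d)) (G : Fin d → MonoPoly (m+i+e) (e+i+d)),
      IsIDCovering (m+i+e) (e+i+d) i d F G := by
  rcases Nat.eq_zero_or_pos m with hm0 | hm1
  · obtain ⟨F, G, _⟩ := H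
    subst hm0
    have hp : i = 0 := by
      by_contra hc
      exact monoPoly_zero_false (F ⟨0, by omega⟩)
    have hd : d - e = 0 := by
      by_contra hc
      exact monoPoly_zero_false (G ⟨0, by omega⟩)
    subst hp
    have hde : d = e := by omega
    rw [hde]
    have hcas := isid_of_ECov he (ECov_flip (ECov_cascade he))
    rw [show (0:ℕ)+0+e = e by omega, show e+0+e = e+e by omega]
    exact hcas
  · obtain ⟨F, G, hFG⟩ := H
    have h1 : ECov m (e+i+d) i (d-e) := ECov_of_isid hFG
    have h2 : ECov m (e+(d-e)+i) (d-e) i :=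
      ECov_clip (by omega) (by omega) (ECov_flip h1)
    have h3 := ECov_surgery he hm1 h2
    rw [show (d-e)+e = d by omega] at h3
    have h4 : ECov (m+i+e) (e+i+d) i d := by
      rw [show e+i+d = e+d+i by omega]
      exact ECov_flip h3
    exact isid_of_ECov (by omega) h4

/-- With `m̃(e,i,d) := m(e+i+d, i, d)` (supremum in `ℕ∞` of widths admitting an
`(i,d)`-covering of height `e+i+d`): if `i ≥ e` then
`m̃(e,i,d) ≥ d + e + m̃(e,i-e,d)`; if `d ≥ e` then
`m̃(e,i,d) ≥ i + e + m̃(e,i,d-e)`.  Equivalently, coverings of the smaller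
rectangles extend to coverings of the larger ones. -/

theorem stmt13 (e i d : ℕ) :
    ((e ≤ i → (d : ℕ∞) + (e : ℕ∞) + mSup (e + (i - e) + d) (i - e) d ≤
        mSup (e + i + d) i d) ∧
     (e ≤ d → (i : ℕ∞) + (e : ℕ∞) + mSup (e + i + (d - e)) i (d - e) ≤
        mSup (e + i + d) i d)) ∧
    ((∀ m : ℕ, e ≤ i →
        (∃ (F : Fin (i - e) → MonoPoly m (e + i + d))
           (G : Fin d → MonoPoly m (e + i + d)),
          IsIDCovering m (e + i + d) (i - e) d F G) →
        ∃ (F : Fin i → MonoPoly (m + d + e) (e + i + d))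
          (G : Fin d → MonoPoly (m + d + e) (e + i + d)),
          IsIDCovering (m + d + e) (e + i + d) i d F G) ∧
     (∀ m : ℕ, e ≤ d →
        (∃ (F : Fin i → MonoPoly m (e + i + d))
           (G : Fin (d - e) → MonoPoly m (e + i + d)),
          IsIDCovering m (e + i + d) i (d - e) F G) →
        ∃ (F : Fin i → MonoPoly (m + i + e) (e + i + d))
          (G : Fin d → MonoPoly (m + i + e) (e + i + d)),
          IsIDCovering (m + i + e) (e + i + d) i d F G)) := by
  constructor
  · constructor
    · -- first inequality
      intro hei
      rcases Nat.eq_zero_or_pos e with he0 | he1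
      · subst he0
        rw [show (0:ℕ)+(i-0)+d = i+d by omega, show (0:ℕ)+i+d = i+d by omega, Nat.sub_zero]
        have htop : mSup (i+d) i d = ⊤ := by
          unfold mSup
          apply enat_biSup_eq_top
          intro N
          refine ⟨N+1, ?_, by omega⟩
          exact isid_of_ECov (by omega) (ECov_const (N+1) i d)
        rw [htop]
        exact le_top
      · unfold mSup
        rw [show (d:ℕ∞) + (e:ℕ∞) = ((d+e : ℕ) : ℕ∞) by push_cast; ring]
        apply enat_sup_le
        · exact covset_nonempty (by omega)
        · intro m hm
          rw [show m + (d+e) = m+d+e by omega]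
          exact core_B1i he1 hei hm
    · -- second inequality
      intro hed
      rcases Nat.eq_zero_or_pos e with he0 | he1
      · subst he0
        rw [show (0:ℕ)+i+(d-0) = i+d by omega, show (0:ℕ)+i+d = i+d by omega, Nat.sub_zero]
        have htop : mSup (i+d) i d = ⊤ := by
          unfold mSup
          apply enat_biSup_eq_top
          intro N
          refine ⟨N+1, ?_, by omega⟩
          exact isid_of_ECov (by omega) (ECov_const (N+1) i d)
        rw [htop]
        exact le_top
      · unfold mSup
        rw [show (i:ℕ∞) + (e:ℕ∞) = ((i+e : ℕ) : ℕ∞) by push_cast; ring]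
        apply enat_sup_le
        · exact covset_nonempty (by omega)
        · intro m hm
          rw [show m + (i+e) = m+i+e by omega]
          exact core_B1d he1 hed hm
  · constructor
    · -- constructive, increasing side
      intro m hei H
      rcases Nat.eq_zero_or_pos e with he0 | he1
      · subst he0
        rw [Nat.sub_zero] at H
        rcases Nat.eq_zero_or_pos (m+d) with hmd0 | hmd1
        · obtain ⟨F, G, _⟩ := H
          obtain ⟨rfl, rfl⟩ : m = 0 ∧ d = 0 := by omega
          have hi0 : i = 0 := by
            by_contra hc
            exact monoPoly_zero_false (F ⟨0, by omega⟩)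
          subst hi0
          rw [show (0:ℕ)+0+0 = 0 by omega]
          exact isid_zero
        · have := isid_of_ECov (show 1 ≤ m+d+0 by omega)
            (show ECov (m+d+0) ((0:ℕ)+i+d) i d by
              rw [show (0:ℕ)+i+d = i+d by omega]
              exact ECov_const (m+d+0) i d)
          exact this
      · exact core_B2i he1 hei H
    · -- constructive, decreasing side
      intro m hed H
      rcases Nat.eq_zero_or_pos e with he0 | he1
      · subst he0
        rw [Nat.sub_zero] at H
        rcases Nat.eq_zero_or_pos (m+i) with hmi0 | hmi1
        · obtain ⟨F, G, _⟩ := H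
          obtain ⟨rfl, rfl⟩ : m = 0 ∧ i = 0 := by omega
          have hd0 : d = 0 := by
            by_contra hc
            exact monoPoly_zero_false (G ⟨0, by omega⟩)
          subst hd0
          rw [show (0:ℕ)+0+0 = 0 by omega]
          exact isid_zero
        · have := isid_of_ECov (show 1 ≤ m+i+0 by omega)
            (show ECov (m+i+0) ((0:ℕ)+i+d) i d by
              rw [show (0:ℕ)+i+d = i+d by omega]
              exact ECov_const (m+i+0) i d)
          exact this
      · exact core_B2d he1 hed H
end
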